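/- arXiv:2601.10670 — 4 statements merged into one kernel-verified Lean document; each statement's English description precedes it below -/
import Mathlib

section
/- Let ℓ ≥ 1 and let A ∈ GL₂(𝔬_ℓ). Then A is real in GL₂(𝔬_ℓ) (i.e., A is conjugate in GL₂(𝔬_ℓ) to A⁻¹) if and only if det(A) ∈ {1, −1} and tr(A) = tr(A⁻¹). -/
open Matrix

lemma aux_sq_one {R : Type*} [CommRing R] [IsLocalRing R] (h2 : IsUnit (2:R))
    (u : R) (hu : u * u = 1) : u = 1 ∨ u = -1 := by
  by_cases h1 : IsUnit (u - 1)
  · right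
    have h := h1.mul_left_cancel (show (u-1)*(u+1) = (u-1)*0 by linear_combination hu)
    exact eq_neg_of_add_eq_zero_left h
  · by_cases hp : IsUnit (u + 1)
    · left
      have h := hp.mul_left_cancel (show (u+1)*(u-1) = (u+1)*0 by linear_combination hu)
      have := sub_eq_zero.mp h
      exact this
    · exfalso
      have hm1 : u - 1 ∈ IsLocalRing.maximalIdeal R := by
        rwa [IsLocalRing.mem_maximalIdeal, mem_nonunits_iff]
      have hm2 : u + 1 ∈ IsLocalRing.maximalIdeal R := by
        rwa [IsLocalRing.mem_maximalIdeal, mem_nonunits_iff]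
      have : (2:R) ∈ IsLocalRing.maximalIdeal R := by
        have h' := Ideal.sub_mem _ hm2 hm1
        have h21 : (2:R) = (u+1) - (u-1) := by ring
        rwa [h21]
      exact (IsLocalRing.mem_maximalIdeal _).mp this h2

lemma aux_quad {R : Type*} [CommRing R] [IsLocalRing R] (h2 : IsUnit (2:R))
    (p q : R) : ∃ t : R, IsUnit (t * t + p * t + q) := by
  obtain ⟨v, hv⟩ := h2
  set i : R := ↑v⁻¹ with hi
  have hvi : (2:R) * i = 1 := by rw [hi, ← hv]; exact_mod_cast v.mul_inv
  set d : R := q - p * p * (i * i) with hd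
  by_cases hdu : IsUnit d
  · refine ⟨-(p * i), ?_⟩
    have : -(p*i) * -(p*i) + p * -(p*i) + q = d + (p*p*i) * ((2:R)*i - 1) := by ring
    rw [this, hvi]
    simpa using hdu
  · refine ⟨1 - p * i, ?_⟩
    have : (1 - p*i) * (1 - p*i) + p * (1 - p*i) + q
        = (1 + d) + (p*p*i - p) * ((2:R)*i - 1) := by ring
    rw [this, hvi]
    simpa using (IsLocalRing.isUnit_one_sub_self_of_mem_nonunits (-d) (by simpa using hdu)).neg.neg

lemma aux_solve {R : Type*} [CommRing R] [IsLocalRing R] (h2 : IsUnit (2:R))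
    (htot : ∀ a b : R, a ∣ b ∨ b ∣ a) (b c e : R) :
    ∃ x y z : R, b * x + e * y - c * z = 0 ∧ IsUnit (x * z - y * y) := by
  by_cases hb : b ∣ c ∧ b ∣ e
  · obtain ⟨⟨c₁, hc₁⟩, ⟨e₁, he₁⟩⟩ := hb
    obtain ⟨t, ht⟩ := aux_quad h2 e₁ (-c₁)
    refine ⟨c₁ - e₁ * t, t, 1, by rw [hc₁, he₁]; ring, ?_⟩
    have : (c₁ - e₁ * t) * 1 - t * t = -(t * t + e₁ * t + -c₁) := by ring
    rw [this]; exact ht.neg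
  · by_cases hc : c ∣ b ∧ c ∣ e
    · obtain ⟨⟨b₁, hb₁⟩, ⟨e₁, he₁⟩⟩ := hc
      obtain ⟨t, ht⟩ := aux_quad h2 (-e₁) (-b₁)
      refine ⟨1, t, b₁ + e₁ * t, by rw [hb₁, he₁]; ring, ?_⟩
      have : 1 * (b₁ + e₁ * t) - t * t = -(t * t + -e₁ * t + -b₁) := by ring
      rw [this]; exact ht.neg
    · -- now e ∣ b and e ∣ c with non-unit quotients
      have heb : e ∣ b := by
        by_contra h
        rcases htot e b with h' | hbe
        · exact h h'
        rcases htot b c with hbc | hcb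
        · exact hb ⟨hbc, hbe⟩
        · exact hc ⟨hcb, hcb.trans hbe⟩
      have hec : e ∣ c := by
        by_contra h
        rcases htot e c with h' | hce
        · exact h h'
        rcases htot c b with hcb | hbc
        · exact hc ⟨hcb, hce⟩
        · exact hb ⟨hbc, hbc.trans hce⟩
      obtain ⟨b₁, hb₁⟩ := heb
      obtain ⟨c₁, hc₁⟩ := hec
      have hbu : ¬ IsUnit b₁ := by
        intro hu
        obtain ⟨w, hw⟩ := hu
        have hbe : b ∣ e := ⟨↑w⁻¹, by rw [hb₁, ← hw]; rw [mul_assoc]; simp⟩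
        exact hb ⟨hbe.trans ⟨c₁, hc₁⟩, hbe⟩
      have hcu : ¬ IsUnit c₁ := by
        intro hu
        obtain ⟨w, hw⟩ := hu
        have hce : c ∣ e := ⟨↑w⁻¹, by rw [hc₁, ← hw]; rw [mul_assoc]; simp⟩
        exact hc ⟨hce.trans ⟨b₁, hb₁⟩, hce⟩
      refine ⟨1, c₁ - b₁, 1, by rw [hb₁, hc₁]; ring, ?_⟩
      have hy : ¬ IsUnit ((c₁ - b₁) * (c₁ - b₁)) := by
        intro hu
        have : IsUnit (c₁ - b₁) := isUnit_of_mul_isUnit_left hu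
        rcases IsLocalRing.isUnit_or_isUnit_of_isUnit_add (a := c₁) (b := -b₁)
          (by simpa [sub_eq_add_neg] using this) with h | h
        · exact hcu h
        · exact hbu (by simpa using h)
      have : (1:R) * 1 - (c₁ - b₁) * (c₁ - b₁) = 1 - (c₁ - b₁) * (c₁ - b₁) := by ring
      rw [this]
      exact IsLocalRing.isUnit_one_sub_self_of_mem_nonunits _ (by rwa [mem_nonunits_iff])

lemma aux_conj_adj {R : Type*} [CommRing R] (a b c d x y z : R)
    (hE : b * x + (d - a) * y - c * z = 0) :
    !![y, z; -x, -y] * !![a, b; c, d] = adjugate !![a, b; c, d] * !![y, z; -x, -y] := by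
  rw [adjugate_fin_two_of, Matrix.mul_fin_two, Matrix.mul_fin_two]
  ext i j
  fin_cases i <;> fin_cases j <;> simp <;>
    first | ring1 | (linear_combination -hE)

lemma aux_trace_adj {R : Type*} [CommRing R] (M : Matrix (Fin 2) (Fin 2) R) :
    Matrix.trace (adjugate M) = Matrix.trace M := by
  rw [Matrix.eta_fin_two M, adjugate_fin_two_of]
  simp [Matrix.trace_fin_two, add_comm]

lemma aux_CH {R : Type*} [CommRing R] (M : Matrix (Fin 2) (Fin 2) R) :
    M * M = Matrix.trace M • M - M.det • (1 : Matrix (Fin 2) (Fin 2) R) := by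
  rw [Matrix.eta_fin_two M]
  ext i j
  fin_cases i <;> fin_cases j <;>
    simp [Matrix.mul_apply, Fin.sum_univ_two, Matrix.trace_fin_two, Matrix.det_fin_two,
      Matrix.one_apply] <;> ring


theorem real_iff_det_trace_GL2
    (O : Type) [CommRing O] [IsDomain O] [IsDiscreteValuationRing O]
    [IsAdicComplete (IsLocalRing.maximalIdeal O) O]
    (π : O) (hπ : IsLocalRing.maximalIdeal O = Ideal.span {π})
    [Finite (IsLocalRing.ResidueField O)]
    (hodd : Odd (ringChar (IsLocalRing.ResidueField O)))
    (ℓ : ℕ) (hℓ : 1 ≤ ℓ)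
    (A : GL (Fin 2) (O ⧸ Ideal.span {π} ^ ℓ)) :
    IsConj A A⁻¹ ↔
      (((A : Matrix (Fin 2) (Fin 2) (O ⧸ Ideal.span {π} ^ ℓ)).det = 1 ∨
        (A : Matrix (Fin 2) (Fin 2) (O ⧸ Ideal.span {π} ^ ℓ)).det = -1) ∧
       Matrix.trace (A : Matrix (Fin 2) (Fin 2) (O ⧸ Ideal.span {π} ^ ℓ)) =
         Matrix.trace ((A⁻¹ : GL (Fin 2) (O ⧸ Ideal.span {π} ^ ℓ)) :
           Matrix (Fin 2) (Fin 2) (O ⧸ Ideal.span {π} ^ ℓ))) := by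
  have hIne : Ideal.span {π} ^ ℓ ≠ (⊤ : Ideal O) := by
    intro h
    have h1 : Ideal.span {π} ^ ℓ ≤ IsLocalRing.maximalIdeal O := by
      rw [← hπ]
      exact Ideal.pow_le_self (by omega)
    rw [h] at h1
    exact (IsLocalRing.maximalIdeal.isMaximal O).ne_top (top_le_iff.mp h1)
  haveI : Nontrivial (O ⧸ Ideal.span {π} ^ ℓ) := Ideal.Quotient.nontrivial_iff.mpr hIne
  haveI : IsLocalRing (O ⧸ Ideal.span {π} ^ ℓ) :=
    IsLocalRing.of_surjective' (Ideal.Quotient.mk _) Ideal.Quotient.mk_surjective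
  have h2O : IsUnit (2 : O) := by
    by_contra h
    have hz : (IsLocalRing.residue O) (2 : O) = 0 := (IsLocalRing.residue_eq_zero_iff _).mpr ?_
    · have hz2 : ((2 : ℕ) : IsLocalRing.ResidueField O) = 0 := by
        have h' : ((IsLocalRing.residue O) (2 : O)) = ((2 : ℕ) : IsLocalRing.ResidueField O) := by
          push_cast
          exact map_ofNat _ 2
        rw [h'] at hz
        exact hz
      have hdvd : ringChar (IsLocalRing.ResidueField O) ∣ 2 := (ringChar.spec _ 2).mp hz2
      rcases (Nat.dvd_prime Nat.prime_two).mp hdvd with h1 | h1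
      · have : ((1 : ℕ) : IsLocalRing.ResidueField O) = 0 :=
          (ringChar.spec _ 1).mpr (h1 ▸ dvd_refl _)
        rw [Nat.cast_one] at this
        exact one_ne_zero this
      · rw [h1] at hodd
        exact (Nat.not_odd_iff_even.mpr even_two) hodd
    · rwa [IsLocalRing.mem_maximalIdeal]
  have h2 : IsUnit (2 : O ⧸ Ideal.span {π} ^ ℓ) := by
    have h' := h2O.map (Ideal.Quotient.mk (Ideal.span {π} ^ ℓ))
    simp only [map_ofNat] at h'
    exact h'
  have htot : ∀ a b : O ⧸ Ideal.span {π} ^ ℓ, a ∣ b ∨ b ∣ a := by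
    intro a b
    obtain ⟨a', rfl⟩ := Ideal.Quotient.mk_surjective a
    obtain ⟨b', rfl⟩ := Ideal.Quotient.mk_surjective b
    rcases ValuationRing.dvd_total a' b' with h | h
    · exact Or.inl (map_dvd _ h)
    · exact Or.inr (map_dvd _ h)
  set M : Matrix (Fin 2) (Fin 2) (O ⧸ Ideal.span {π} ^ ℓ) :=
    (A : Matrix (Fin 2) (Fin 2) (O ⧸ Ideal.span {π} ^ ℓ)) with hM
  set N : Matrix (Fin 2) (Fin 2) (O ⧸ Ideal.span {π} ^ ℓ) :=
    ((A⁻¹ : GL (Fin 2) (O ⧸ Ideal.span {π} ^ ℓ)) :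
      Matrix (Fin 2) (Fin 2) (O ⧸ Ideal.span {π} ^ ℓ)) with hN
  have hMN : M * N = 1 := by rw [hM, hN, ← Units.val_mul]; simp
  have hNM : N * M = 1 := by rw [hM, hN, ← Units.val_mul]; simp
  constructor
  · rintro h
    obtain ⟨g, hg⟩ := isConj_iff.mp h
    have hgval : N = (↑g : Matrix (Fin 2) (Fin 2) (O ⧸ Ideal.span {π} ^ ℓ)) * M *
        (↑(g⁻¹) : Matrix (Fin 2) (Fin 2) (O ⧸ Ideal.span {π} ^ ℓ)) := by
      rw [hN, hM, ← hg]; simp [Units.val_mul]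
    have hgg : (↑g : Matrix (Fin 2) (Fin 2) (O ⧸ Ideal.span {π} ^ ℓ)) *
        (↑(g⁻¹) : Matrix (Fin 2) (Fin 2) (O ⧸ Ideal.span {π} ^ ℓ)) = 1 := by
      rw [← Units.val_mul]; simp
    have hgg' : (↑(g⁻¹) : Matrix (Fin 2) (Fin 2) (O ⧸ Ideal.span {π} ^ ℓ)) *
        (↑g : Matrix (Fin 2) (Fin 2) (O ⧸ Ideal.span {π} ^ ℓ)) = 1 := by
      rw [← Units.val_mul]; simp
    have hNdet : N.det = M.det := by
      rw [hgval, Matrix.det_mul, Matrix.det_mul]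
      have h1 : ((↑g : Matrix (Fin 2) (Fin 2) (O ⧸ Ideal.span {π} ^ ℓ))).det *
          ((↑(g⁻¹) : Matrix (Fin 2) (Fin 2) (O ⧸ Ideal.span {π} ^ ℓ))).det = 1 := by
        rw [← Matrix.det_mul, hgg, Matrix.det_one]
      linear_combination M.det * h1
    have hsq : M.det * M.det = 1 := by
      have hd : M.det * N.det = 1 := by rw [← Matrix.det_mul, hMN, Matrix.det_one]
      rw [hNdet] at hd
      exact hd
    refine ⟨aux_sq_one h2 _ hsq, ?_⟩
    rw [hgval, Matrix.trace_mul_comm, ← mul_assoc, hgg', one_mul]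
  · rintro ⟨hdet, htr⟩
    rcases hdet with hdet | hdet
    · have hNadj : N = adjugate M := by
        have hMadj : M * adjugate M = 1 := by
          rw [Matrix.mul_adjugate, hdet, one_smul]
        calc N = N * (M * adjugate M) := by rw [hMadj, mul_one]
          _ = (N * M) * adjugate M := by rw [mul_assoc]
          _ = adjugate M := by rw [hNM, one_mul]
      obtain ⟨x, y, z, hE, hu⟩ := aux_solve h2 htot (M 0 1) (M 1 0) (M 1 1 - M 0 0)
      set Y : Matrix (Fin 2) (Fin 2) (O ⧸ Ideal.span {π} ^ ℓ) := !![y, z; -x, -y] with hY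
      have hYdet : IsUnit Y.det := by
        rw [hY, Matrix.det_fin_two_of]
        have he : y * -y - z * -x = x * z - y * y := by ring
        rw [he]; exact hu
      have hYU : IsUnit Y := (Matrix.isUnit_iff_isUnit_det Y).mpr hYdet
      refine isConj_iff.mpr ⟨hYU.unit, ?_⟩
      rw [mul_inv_eq_iff_eq_mul]
      apply Units.ext
      rw [Units.val_mul, Units.val_mul, IsUnit.unit_spec]
      show Y * M = N * Y
      rw [hNadj, hY]
      have hc := aux_conj_adj (M 0 0) (M 0 1) (M 1 0) (M 1 1) x y z hE
      nth_rewrite 1 [Matrix.eta_fin_two M]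
      nth_rewrite 2 [Matrix.eta_fin_two M]
      exact hc
    · have hNadj : N = -adjugate M := by
        have hMadj : M * (-adjugate M) = 1 := by
          rw [mul_neg, Matrix.mul_adjugate, hdet]
          simp
        calc N = N * (M * (-adjugate M)) := by rw [hMadj, mul_one]
          _ = (N * M) * (-adjugate M) := by rw [mul_assoc]
          _ = -adjugate M := by rw [hNM, one_mul]
      have htr0 : Matrix.trace M = 0 := by
        have h'' : Matrix.trace N = -Matrix.trace M := by
          rw [hNadj, Matrix.trace_neg, aux_trace_adj]
        have h' : Matrix.trace M = -Matrix.trace M := htr.trans h''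
        have h2' : (2 : O ⧸ Ideal.span {π} ^ ℓ) * Matrix.trace M =
            (2 : O ⧸ Ideal.span {π} ^ ℓ) * 0 := by
          rw [mul_zero]; linear_combination h'
        exact h2.mul_left_cancel h2'
      have hMM : M * M = 1 := by
        rw [aux_CH M, htr0, hdet, zero_smul, neg_smul, one_smul, zero_sub, neg_neg]
      have hAA : A * A = 1 := by
        apply Units.ext
        rw [Units.val_mul]
        exact hMM
      have hinv : A⁻¹ = A := inv_eq_of_mul_eq_one_right hAA
      rw [hinv]
end

section
/- Let ℓ ≥ 1. Every real element of GL₂(𝔬_ℓ) is strongly real; that is, if A ∈ GL₂(𝔬_ℓ) is conjugate in GL₂(𝔬_ℓ) to A⁻¹, then there exists h ∈ GL₂(𝔬_ℓ) with h² = 1 and h A h⁻¹ = A⁻¹. -/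
open Matrix


lemma quad_root {R : Type*} [CommRing R] {α β : R} (γ : R)
    (hα : IsNilpotent α) (hβ : IsUnit β) :
    ∃ μ : R, α*μ^2 + β*μ + γ = 0 := by
  obtain ⟨N, hN⟩ := hα
  have key : ∀ n : ℕ, ∃ μ t : R, α*μ^2 + β*μ + γ = α^n * t := by
    intro n
    induction n with
    | zero => exact ⟨0, γ, by ring⟩
    | succ n ih =>
      obtain ⟨μ, t, h⟩ := ih
      have hnil : IsNilpotent (2*α*μ) :=
        ⟨N, by rw [mul_pow, mul_pow, hN]; ring⟩
      have hu : IsUnit (β + 2*α*μ) := hnil.isUnit_add_left_of_commute hβ (mul_comm _ _)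
      set u := hu.unit with hu_def
      have huv : (β + 2*α*μ) * ↑u⁻¹ = 1 := by
        rw [← hu.unit_spec]; exact u.mul_inv
      refine ⟨μ - α^n * t * ↑u⁻¹, α^n * (t * ↑u⁻¹)^2, ?_⟩
      have expand : α*(μ - α^n * t * ↑u⁻¹)^2 + β*(μ - α^n * t * ↑u⁻¹) + γ
          = (α*μ^2 + β*μ + γ) - (α^n*t)*((β + 2*α*μ) * ↑u⁻¹)
            + α * (α^n * t * ↑u⁻¹)^2 := by ring
      rw [expand, h, huv, mul_one, sub_self, zero_add]
      ring
  obtain ⟨μ, t, h⟩ := key N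
  exact ⟨μ, by rw [h, hN, zero_mul]⟩



lemma key_solve {O : Type*} [CommRing O] [IsDomain O] [IsDiscreteValuationRing O]
    {π : O} (hirr : Irreducible π) (h2 : IsUnit (2:O)) :
    ∀ ℓ : ℕ, ∀ a b c : O, ∃ x y z : O,
      π^ℓ ∣ (x^2 + y*z - 1) ∧ π^ℓ ∣ (a*x + b*z + c*y) := by
  have hmax : IsLocalRing.maximalIdeal O = Ideal.span {π} :=
    (IsDiscreteValuationRing.irreducible_iff_uniformizer π).mp hirr
  have hdvd_of_nonunit : ∀ r : O, ¬ IsUnit r → π ∣ r := by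
    intro r hr
    have : r ∈ IsLocalRing.maximalIdeal O := hr
    rwa [hmax, Ideal.mem_span_singleton] at this
  have hunit_of_ndvd : ∀ r : O, ¬ π ∣ r → IsUnit r := by
    intro r hr
    by_contra h
    exact hr (hdvd_of_nonunit r h)
  intro ℓ
  induction ℓ with
  | zero => intro a b c; exact ⟨1, 0, 0, by simp, by simp⟩
  | succ ℓ ih =>
    intro a b c
    by_cases hb : IsUnit b
    · refine ⟨1, 0, -a * ↑hb.unit⁻¹, by norm_num, ?_⟩
      have h0 : a*1 + b*(-a * ↑hb.unit⁻¹) + c*0 = 0 := by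
        linear_combination (-a) * hb.mul_val_inv
      rw [h0]; exact dvd_zero _
    · by_cases hc : IsUnit c
      · refine ⟨1, -a * ↑hc.unit⁻¹, 0, by norm_num, ?_⟩
        have h0 : a*1 + b*0 + c*(-a * ↑hc.unit⁻¹) = 0 := by
          linear_combination (-a) * hc.mul_val_inv
        rw [h0]; exact dvd_zero _
      · by_cases ha : IsUnit a
        · -- a unit, b c nonunits: use quad_root in O ⧸ (π^(ℓ+1))
          obtain ⟨c₁, hc₁⟩ := hdvd_of_nonunit c hc
          set mk : O →+* O ⧸ Ideal.span {π^(ℓ+1)} :=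
            Ideal.Quotient.mk (Ideal.span {π^(ℓ+1)}) with hmk
          have hmem : ∀ r : O, mk r = 0 ↔ π^(ℓ+1) ∣ r := by
            intro r
            rw [hmk, Ideal.Quotient.eq_zero_iff_mem, Ideal.mem_span_singleton]
          have hcnil : IsNilpotent (mk (c^2)) := by
            refine ⟨ℓ+1, ?_⟩
            rw [← _root_.map_pow, hmem]
            exact ⟨π^(ℓ+1) * c₁^(2*(ℓ+1)), by rw [hc₁]; ring⟩
          have hbeta : IsUnit (2*b*c + a^2) := by
            apply hunit_of_ndvd
            intro hdd
            obtain ⟨b₁, hb₁⟩ := hdvd_of_nonunit b hb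
            have h1 : π ∣ a^2 := by
              obtain ⟨e, he⟩ := hdd
              exact ⟨e - 2*b₁*c, by rw [hb₁] at he; linear_combination he⟩
            have h3 : π ∣ a := hirr.prime.dvd_of_dvd_pow h1
            exact hirr.not_isUnit (isUnit_of_dvd_unit h3 ha)
          obtain ⟨μ, hμ⟩ := quad_root (mk (b^2 - a^2)) hcnil ((hbeta).map mk)
          obtain ⟨y, hy⟩ := Ideal.Quotient.mk_surjective μ
          have hE : π^(ℓ+1) ∣ (c^2*y^2 + (2*b*c + a^2)*y + (b^2 - a^2)) := by
            rw [← hmem]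
            rw [← hy] at hμ
            simp only [_root_.map_add, _root_.map_mul, _root_.map_pow, _root_.map_sub, _root_.map_ofNat] at hμ ⊢
            linear_combination hμ
          set d : O := ↑ha.unit⁻¹ with hd
          have had : a * d = 1 := ha.mul_val_inv
          obtain ⟨w, hw⟩ := hE
          refine ⟨-(b + c*y) * d, y, 1, ⟨w * d^2, ?_⟩, ?_⟩
          · linear_combination d^2 * hw + (-(y-1)*(1+a*d)) * had
          · have h0 : a*(-(b + c*y) * d) + b*1 + c*y = 0 := by
              linear_combination (-(b+c*y)) * had
            rw [h0]; exact dvd_zero _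
        · -- a, b, c all nonunits
          obtain ⟨a₁, ha₁⟩ := hdvd_of_nonunit a ha
          obtain ⟨b₁, hb₁⟩ := hdvd_of_nonunit b hb
          obtain ⟨c₁, hc₁⟩ := hdvd_of_nonunit c hc
          obtain _ | m := ℓ
          · exact ⟨1, 0, 0, by norm_num, by
              rw [pow_one, ha₁]; exact ⟨a₁*1 + b₁*0 + c₁*0, by ring⟩⟩
          · obtain ⟨x, y, z, hq, hl⟩ := ih a₁ b₁ c₁
            obtain ⟨w, hw⟩ := hq
            obtain ⟨v, hv⟩ := hl
            have hsome : ¬ π ∣ x ∨ ¬ π ∣ y ∨ ¬ π ∣ z := by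
              by_contra h
              push_neg at h
              have hd1 : π ∣ 1 := by
                have h1 : (1:O) = x*x + y*z - π^(m+1)*w := by linear_combination -hw
                rw [h1]
                refine dvd_sub (dvd_add (h.1.mul_right x) (h.2.1.mul_right z)) ?_
                exact Dvd.dvd.mul_right (dvd_pow_self π (Nat.succ_ne_zero m)) w
              exact hirr.not_isUnit (isUnit_of_dvd_unit hd1 isUnit_one)
            rcases hsome with hx | hy | hz
            · have hux : IsUnit (2*x) := h2.mul (hunit_of_ndvd x hx)
              set e : O := ↑hux.unit⁻¹ with he
              have hxe : (2*x) * e = 1 := hux.mul_val_inv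
              refine ⟨x - π^(m+1) * w * e, y, z, ⟨π^m*(w*e)^2, ?_⟩, ⟨v - a₁*w*e, ?_⟩⟩
              · linear_combination hw + (-(π^(m+1)*w)) * hxe
              · rw [ha₁, hb₁, hc₁]
                linear_combination π * hv
            · have huy : IsUnit y := hunit_of_ndvd y hy
              set e : O := ↑huy.unit⁻¹ with he
              have hye : y * e = 1 := huy.mul_val_inv
              refine ⟨x, y, z - π^(m+1) * w * e, ⟨0, ?_⟩, ⟨v - b₁*w*e, ?_⟩⟩
              · linear_combination hw + (-(π^(m+1)*w)) * hye
              · rw [ha₁, hb₁, hc₁]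
                linear_combination π * hv
            · have huz : IsUnit z := hunit_of_ndvd z hz
              set e : O := ↑huz.unit⁻¹ with he
              have hze : z * e = 1 := huz.mul_val_inv
              refine ⟨x, y - π^(m+1) * w * e, z, ⟨0, ?_⟩, ⟨v - c₁*w*e, ?_⟩⟩
              · linear_combination hw + (-(π^(m+1)*w)) * hze
              · rw [ha₁, hb₁, hc₁]
                linear_combination π * hv




theorem real_implies_strongly_real_GL2
    (O : Type) [CommRing O] [IsDomain O] [IsDiscreteValuationRing O]
    [IsAdicComplete (IsLocalRing.maximalIdeal O) O]
    (π : O) (hπ : IsLocalRing.maximalIdeal O = Ideal.span {π})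
    [Finite (IsLocalRing.ResidueField O)]
    (hodd : Odd (ringChar (IsLocalRing.ResidueField O)))
    (ℓ : ℕ) (hℓ : 1 ≤ ℓ)
    (A : GL (Fin 2) (O ⧸ Ideal.span {π} ^ ℓ))
    (hreal : IsConj A A⁻¹) :
    ∃ h : GL (Fin 2) (O ⧸ Ideal.span {π} ^ ℓ), h ^ 2 = 1 ∧ h * A * h⁻¹ = A⁻¹ := by
  have hirr : Irreducible π := (IsDiscreteValuationRing.irreducible_iff_uniformizer π).mpr hπ
  -- 2 is a unit in O
  have h2O : IsUnit (2:O) := by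
    by_contra h
    have h2m : (2:O) ∈ IsLocalRing.maximalIdeal O := h
    have hz : (2 : IsLocalRing.ResidueField O) = 0 := by
      have := Ideal.Quotient.eq_zero_iff_mem.mpr h2m
      rw [map_ofNat] at this; exact this
    have hdvd : ringChar (IsLocalRing.ResidueField O) ∣ 2 := by
      have : ((2:ℕ) : IsLocalRing.ResidueField O) = 0 := by exact_mod_cast hz
      exact (CharP.cast_eq_zero_iff _ (ringChar _) 2).mp this
    rcases (Nat.prime_two.eq_one_or_self_of_dvd _ hdvd) with h1 | h2
    · exact CharP.ringChar_ne_one h1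
    · rw [h2] at hodd
      exact (Nat.not_odd_iff_even.mpr (even_two)) hodd
  set R := O ⧸ Ideal.span {π} ^ ℓ with hR
  set mk : O →+* R := Ideal.Quotient.mk _ with hmkdef
  have hmem0 : ∀ r : O, mk r = 0 ↔ π^ℓ ∣ r := by
    intro r
    rw [hmkdef, Ideal.Quotient.eq_zero_iff_mem, Ideal.span_singleton_pow,
      Ideal.mem_span_singleton]
  have hmksurj : Function.Surjective mk := Ideal.Quotient.mk_surjective
  have h2R : IsUnit (2:R) := by
    have := h2O.map mk
    rwa [map_ofNat] at this
  obtain ⟨g, hg⟩ := isConj_iff.mp hreal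
  set M : Matrix (Fin 2) (Fin 2) R := A.val with hMdef
  set M' : Matrix (Fin 2) (Fin 2) R := (A⁻¹).val with hM'def
  have hMM' : M * M' = 1 := A.mul_inv
  have hM'M : M' * M = 1 := A.inv_mul
  have hgv : g.val * M * (g⁻¹).val = M' := congrArg Units.val hg
  have hdetM' : det M' = det M := by
    have h1 : det g.val * det (g⁻¹).val = 1 := by
      rw [← det_mul, Units.mul_inv, det_one]
    rw [← hgv, det_mul, det_mul]
    linear_combination det M * h1
  have htrM' : trace M' = trace M := by
    rw [← hgv, trace_mul_cycle, Units.inv_mul, one_mul]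
  have hddsq : det M * det M = 1 := by
    have := congrArg det hMM'
    rw [det_mul, det_one, hdetM'] at this
    exact this
  -- det M = 1 or det M = -1
  obtain ⟨D, hD⟩ := hmksurj (det M)
  have hDD : π^ℓ ∣ (D+1)*(D-1) := by
    rw [← hmem0]
    have h3 : mk ((D+1)*(D-1)) = (det M + 1) * (det M - 1) := by
      rw [_root_.map_mul, _root_.map_add, _root_.map_sub, _root_.map_one, hD]
    rw [h3]
    linear_combination hddsq
  have hdet_pm : det M = 1 ∨ det M = -1 := by
    by_cases hD1 : π ∣ D + 1
    · right
      have hnd : ¬ π ∣ D - 1 := by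
        intro hD2
        have : π ∣ 2 := by
          have : (2:O) = (D+1) - (D-1) := by ring
          rw [this]
          exact dvd_sub hD1 hD2
        exact hirr.not_isUnit (isUnit_of_dvd_unit this h2O)
      have : π^ℓ ∣ D + 1 := by
        apply hirr.prime.pow_dvd_of_dvd_mul_left ℓ hnd
        rw [mul_comm]
        exact hDD
      have h5 : mk (D+1) = 0 := (hmem0 _).mpr this
      rw [_root_.map_add, _root_.map_one, hD] at h5
      linear_combination h5
    · left
      have : π^ℓ ∣ D - 1 := hirr.prime.pow_dvd_of_dvd_mul_left ℓ hD1 hDD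
      have h5 : mk (D-1) = 0 := (hmem0 _).mpr this
      rw [_root_.map_sub, _root_.map_one, hD] at h5
      linear_combination h5
  set p : R := M 0 0 with hp
  set bb : R := M 0 1 with hbb
  set cc : R := M 1 0 with hcc
  set s : R := M 1 1 with hs
  have hM : M = !![p, bb; cc, s] := M.eta_fin_two
  have hdetfin : det M = p*s - bb*cc := Matrix.det_fin_two M
  have htr : trace M = p + s := Matrix.trace_fin_two M
  rcases hdet_pm with hdet1 | hdetm1
  · -- det M = 1
    have hps : p*s - bb*cc = 1 := by rw [← hdetfin]; exact hdet1
    obtain ⟨P, hP⟩ := hmksurj p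
    obtain ⟨S, hS⟩ := hmksurj s
    obtain ⟨B, hB⟩ := hmksurj bb
    obtain ⟨C, hC⟩ := hmksurj cc
    obtain ⟨x, y, z, hq, hl⟩ := key_solve hirr h2O ℓ (P - S) B C
    set X : R := mk x with hX
    set Y : R := mk y with hY
    set Z : R := mk z with hZ
    have hquad : X^2 + Y*Z = 1 := by
      have h6 := (hmem0 _).mpr hq
      rw [_root_.map_sub, _root_.map_add, _root_.map_mul, _root_.map_pow,
        _root_.map_one] at h6
      linear_combination h6
    have hlin : (p - s)*X + bb*Z + cc*Y = 0 := by
      have h6 := (hmem0 _).mpr hl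
      rw [_root_.map_add, _root_.map_add, _root_.map_mul, _root_.map_mul,
        _root_.map_mul, _root_.map_sub, hP, hS, hB, hC] at h6
      linear_combination h6
    set Hm : Matrix (Fin 2) (Fin 2) R := !![X, Y; Z, -X] with hHmdef
    have hHm2 : Hm * Hm = 1 := by
      ext i j
      fin_cases i <;> fin_cases j <;>
        simp [hHmdef, Matrix.mul_apply, Fin.sum_univ_two, Matrix.one_apply] <;>
        first | linear_combination hquad | linear_combination -hquad | ring
    set N : Matrix (Fin 2) (Fin 2) R := !![s, -bb; -cc, p] with hNdef
    have hMN : M * N = 1 := by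
      rw [hM]
      ext i j
      fin_cases i <;> fin_cases j <;>
        simp [hNdef, Matrix.mul_apply, Fin.sum_univ_two, Matrix.one_apply] <;>
        first | linear_combination hps | linear_combination -hps | ring
    have hM'N : M' = N := by
      calc M' = M' * (M * N) := by rw [hMN, mul_one]
      _ = (M' * M) * N := by rw [mul_assoc]
      _ = N := by rw [hM'M, one_mul]
    have hHMH : Hm * M * Hm = N := by
      rw [hM]
      ext i j
      fin_cases i <;> fin_cases j <;>
        simp [hHmdef, hNdef, Matrix.mul_apply, Fin.sum_univ_two]
      · linear_combination s*hquad + X*hlin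
      · linear_combination (-bb)*hquad + Y*hlin
      · linear_combination (-cc)*hquad + Z*hlin
      · linear_combination p*hquad + (-X)*hlin
    refine ⟨⟨Hm, Hm, hHm2, hHm2⟩, ?_, ?_⟩
    · apply Units.ext
      rw [sq]
      exact hHm2
    · have hhinv : (⟨Hm, Hm, hHm2, hHm2⟩ : GL (Fin 2) R)⁻¹ = ⟨Hm, Hm, hHm2, hHm2⟩ :=
        inv_eq_of_mul_eq_one_right (Units.ext hHm2)
      rw [hhinv]
      apply Units.ext
      show Hm * M * Hm = M'
      rw [hHMH, hM'N]
  · -- det M = -1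
    have hps : p*s - bb*cc = -1 := by rw [← hdetfin]; exact hdetm1
    set N : Matrix (Fin 2) (Fin 2) R := !![-s, bb; cc, -p] with hNdef
    have hMN : M * N = 1 := by
      rw [hM]
      ext i j
      fin_cases i <;> fin_cases j <;>
        simp [hNdef, Matrix.mul_apply, Fin.sum_univ_two, Matrix.one_apply] <;>
        first | linear_combination hps | linear_combination -hps | ring
    have hM'N : M' = N := by
      calc M' = M' * (M * N) := by rw [hMN, mul_one]
      _ = (M' * M) * N := by rw [mul_assoc]
      _ = N := by rw [hM'M, one_mul]
    have h6 : -(p + s) = p + s := by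
      have h7 : trace M' = -(p+s) := by
        rw [hM'N, Matrix.trace_fin_two]
        simp [hNdef]
        try ring
      rw [htrM', htr] at h7
      linear_combination -h7
    have h8 : p + s = 0 := by
      have h7 : (2:R) * (p + s) = 0 := by linear_combination -h6
      calc p + s = (↑h2R.unit⁻¹ * 2) * (p + s) := by rw [h2R.val_inv_mul, one_mul]
      _ = ↑h2R.unit⁻¹ * ((2:R) * (p + s)) := by ring
      _ = 0 := by rw [h7, mul_zero]
    have hNM : N = M := by
      rw [hM, hNdef]
      have hsp : s = -p := by linear_combination h8
      rw [hsp]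
      norm_num
      exact neg_neg p
    have hA'A : A⁻¹ = A := Units.ext (by show M' = M; rw [hM'N, hNM])
    exact ⟨1, one_pow 2, by rw [hA'A]; simp⟩
end

section
/- Let ℓ ≥ 1. The number of conjugacy classes of GL₂(𝔬_ℓ) consisting of real elements equals 1 + q^ℓ + 2·∑_{i=0}^{ℓ−1} q^i, and this also equals the number of conjugacy classes of GL₂(𝔬_ℓ) consisting of strongly real elements. -/
open Matrix

namespace GL2RC

variable {R : Type} [CommRing R]

structure Hyp (p : R) (ℓ : ℕ) : Prop where
  hp : p ^ ℓ = 0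
  hloc : ∀ x : R, IsUnit x ∨ ∃ y, x = p * y
  h2 : IsUnit (2 : R)
  hstrict : ∀ j, j < ℓ → ¬ ∃ y, p ^ j = p ^ (j+1) * y
  hnt : (1:R) ≠ 0
  hl : 1 ≤ ℓ

namespace Hyp

variable {p : R} {ℓ : ℕ}

lemma not_unit_p (H : Hyp p ℓ) : ¬ IsUnit p := by
  intro h
  have := h.pow (n := ℓ)
  rw [H.hp, isUnit_zero_iff] at this
  exact H.hnt this.symm

lemma not_unit_p_mul (H : Hyp p ℓ) (y : R) : ¬ IsUnit (p * y) := by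
  intro h
  exact H.not_unit_p (isUnit_of_mul_isUnit_left h)

lemma unit_add (H : Hyp p ℓ) {a : R} (ha : IsUnit a) (y : R) : IsUnit (a + p * y) := by
  rcases H.hloc (a + p * y) with h | ⟨z, hz⟩
  · exact h
  · exfalso
    have : a = p * (z - y) := by rw [mul_sub, ← hz]; ring
    exact H.not_unit_p_mul (z - y) (this ▸ ha)

lemma pow_zero_of_le (H : Hyp p ℓ) {j : ℕ} (hj : ℓ ≤ j) : p ^ j = 0 := by
  have : p ^ j = p ^ ℓ * p ^ (j - ℓ) := by rw [← pow_add]; congr 1; omega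
  rw [this, H.hp, zero_mul]

lemma two_roots (H : Hyp p ℓ) {c d : R} (h : c ^ 2 = d ^ 2) (hd : IsUnit (2 * d)) :
    c = d ∨ c = -d := by
  have hmul : (c - d) * (c + d) = 0 := by linear_combination h
  rcases H.hloc (c - d) with hu | ⟨y, hy⟩
  · right
    have h0 : c + d = 0 := hu.mul_left_cancel (by rw [hmul, mul_zero])
    linear_combination h0
  · left
    have hu2 : IsUnit (c + d) := by
      have he : c + d = 2 * d + p * y := by linear_combination hy
      rw [he]; exact H.unit_add hd y
    have h0 : c - d = 0 := hu2.mul_left_cancel (by rw [mul_comm, hmul, mul_zero])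
    linear_combination h0

/-- Hensel-style square root lifting. -/
lemma sqrt_aux (H : Hyp p ℓ) :
    ∀ k i : ℕ, ℓ ≤ i + k → 1 ≤ i → ∀ c y : R, IsUnit c →
      ∃ c' d : R, c' = c + p * d ∧ c' ^ 2 = c ^ 2 + p ^ i * y := by
  intro k
  induction k with
  | zero =>
    intro i hik _ c y _
    exact ⟨c, 0, by ring, by rw [H.pow_zero_of_le (by omega)]; ring⟩
  | succ k ih =>
    intro i hik hi c y hc
    by_cases hil : ℓ ≤ i
    · exact ⟨c, 0, by ring, by rw [H.pow_zero_of_le hil]; ring⟩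
    · have h2c : IsUnit (2 * c) := H.h2.mul hc
      obtain ⟨u, hu⟩ := h2c
      have h1 : (2 * c) * ↑u⁻¹ = 1 := by rw [← hu]; exact u.mul_inv
      have hpi : p * p ^ (i-1) = p ^ i := by rw [← pow_succ']; congr 1; omega
      have h2 : p ^ (i+1) * p ^ (i-1) = p ^ i * p ^ i := by
        rw [← pow_add, ← pow_add]; congr 1; omega
      have hc' : IsUnit (c + p ^ i * (y * ↑u⁻¹)) := by
        have hrw : c + p ^ i * (y * ↑u⁻¹) = c + p * (p ^ (i-1) * (y * ↑u⁻¹)) := by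
          linear_combination (-(y * ↑u⁻¹) : R) * hpi
        rw [hrw]; exact H.unit_add hc _
      obtain ⟨c'', d'', hd'', hc''⟩ := ih (i+1) (by omega) (by omega) (c + p ^ i * (y * ↑u⁻¹))
        (-(p ^ (i - 1) * (y * ↑u⁻¹) ^ 2)) hc'
      refine ⟨c'', p ^ (i-1) * (y * ↑u⁻¹) + d'', ?_, ?_⟩
      · rw [hd'']; linear_combination (-(y * ↑u⁻¹) : R) * hpi
      · rw [hc'']; linear_combination (p ^ i * y : R) * h1 - ((y * ↑u⁻¹ : R))^2 * h2

lemma sqrt_exists (H : Hyp p ℓ) (j : ℕ) (hj : 1 ≤ j) (e : R) :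
    ∃ c d : R, c = 1 + p * d ∧ c ^ 2 = 1 - p ^ j * (p ^ j * e) := by
  obtain ⟨c, d, h1, h2⟩ := H.sqrt_aux ℓ 2 (by omega) (by omega) 1
    (-((p ^ (j-1)) ^ 2 * e)) isUnit_one
  refine ⟨c, d, h1, ?_⟩
  rw [h2]
  have : p ^ 2 * (p ^ (j-1)) ^ 2 = p ^ j * p ^ j := by
    rw [← pow_mul, ← pow_add, ← pow_add]; congr 1; omega
  rw [one_pow]
  calc 1 + p ^ 2 * -((p ^ (j-1)) ^ 2 * e) = 1 - (p^2 * (p ^ (j-1))^2) * e := by ring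
    _ = 1 - p ^ j * (p ^ j * e) := by rw [this]; ring

end Hyp

lemma fin2_eq_iff {a b c d a' b' c' d' : R} :
    !![a, b; c, d] = !![a', b'; c', d'] ↔ a = a' ∧ b = b' ∧ c = c' ∧ d = d' := by
  constructor
  · intro h
    exact ⟨by simpa using congrFun (congrFun h 0) 0, by simpa using congrFun (congrFun h 0) 1,
      by simpa using congrFun (congrFun h 1) 0, by simpa using congrFun (congrFun h 1) 1⟩
  · rintro ⟨rfl, rfl, rfl, rfl⟩; rfl

/-- canonical form -/
def Nf (p c : R) (j : ℕ) (b : R) : Matrix (Fin 2) (Fin 2) R := !![c, -b; p ^ j, c]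

lemma det_Nf (p c : R) (j : ℕ) (b : R) : (Nf p c j b).det = c ^ 2 + p ^ j * b := by
  simp [Nf, Matrix.det_fin_two_of]; ring

namespace Hyp
variable {p : R} {ℓ : ℕ}

lemma normal_aux (H : Hyp p ℓ) :
    ∀ k j : ℕ, ℓ ≤ j + k → ∀ c α β γ : R,
      ∃ (j' : ℕ) (e : R) (g : Matrix (Fin 2) (Fin 2) R), IsUnit g.det ∧
        !![c + p ^ j * α, p ^ j * β; p ^ j * γ, c - p ^ j * α] * g
          = g * Nf p c j' (p ^ j' * e) ∧ j' ≤ ℓ := by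
  intro k
  induction k with
  | zero =>
    intro j hj c α β γ
    refine ⟨ℓ, 0, 1, by simp, ?_, le_rfl⟩
    have h0 : p ^ j = 0 := H.pow_zero_of_le (by omega)
    rw [mul_one, one_mul, Nf, h0, H.hp]
    rw [fin2_eq_iff]
    refine ⟨by ring, by ring, by ring, by ring⟩
  | succ k ih =>
    intro j hj c α β γ
    by_cases hil : ℓ ≤ j
    · refine ⟨ℓ, 0, 1, by simp, ?_, le_rfl⟩
      have h0 : p ^ j = 0 := H.pow_zero_of_le hil
      rw [mul_one, one_mul, Nf, h0, H.hp, fin2_eq_iff]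
      refine ⟨by ring, by ring, by ring, by ring⟩
    · rcases H.hloc γ with hγ | ⟨c1, hc1⟩
      · refine ⟨j, -(α^2) - β*γ, !![1, α; 0, γ], by simpa [Matrix.det_fin_two_of] using hγ,
          ?_, by omega⟩
        rw [Nf, Matrix.mul_fin_two, Matrix.mul_fin_two, fin2_eq_iff]
        refine ⟨by ring, by ring, by ring, by ring⟩
      rcases H.hloc β with hβ | ⟨b1, hb1⟩
      · refine ⟨j, -(α^2) - β*γ, !![0, β; 1, -α], ?_, ?_, by omega⟩
        · have : (!![0, β; 1, -α]).det = -β := by simp [Matrix.det_fin_two_of]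
          rw [this]; exact hβ.neg
        rw [Nf, Matrix.mul_fin_two, Matrix.mul_fin_two, fin2_eq_iff]
        refine ⟨by ring, by ring, by ring, by ring⟩
      rcases H.hloc α with hα | ⟨a1, ha1⟩
      · refine ⟨j, -(α^2) - β*γ, !![1, α + β; 1, γ - α], ?_, ?_, by omega⟩
        · have hdet : (!![1, α + β; 1, γ - α]).det = -(2*α) + p * (c1 - b1) := by
            simp [Matrix.det_fin_two_of]; rw [hc1, hb1]; ring
          rw [hdet]
          exact H.unit_add (H.h2.mul hα).neg _
        rw [Nf, Matrix.mul_fin_two, Matrix.mul_fin_two, fin2_eq_iff]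
        refine ⟨by ring, by ring, by ring, by ring⟩
      · obtain ⟨j', e, g, hg, hsc, hj2⟩ := ih (j+1) (by omega) c a1 b1 c1
        refine ⟨j', e, g, hg, ?_, hj2⟩
        have hmat : !![c + p ^ j * α, p ^ j * β; p ^ j * γ, c - p ^ j * α]
            = !![c + p ^ (j+1) * a1, p ^ (j+1) * b1; p ^ (j+1) * c1, c - p ^ (j+1) * a1] := by
          rw [fin2_eq_iff, ha1, hb1, hc1]
          refine ⟨by ring, by ring, by ring, by ring⟩
        rw [hmat]; exact hsc

lemma normal_form (H : Hyp p ℓ) (M : Matrix (Fin 2) (Fin 2) R) :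
    ∃ (c : R) (j : ℕ) (e : R) (g : Matrix (Fin 2) (Fin 2) R), IsUnit g.det ∧
      M * g = g * Nf p c j (p ^ j * e) ∧ j ≤ ℓ := by
  obtain ⟨u2, hu2⟩ := H.h2
  set c : R := ↑u2⁻¹ * (M 0 0 + M 1 1) with hc
  have h2c : (2:R) * ↑u2⁻¹ = 1 := by rw [← hu2]; exact u2.mul_inv
  have hM : M = !![c + p ^ 0 * (M 0 0 - c), p ^ 0 * (M 0 1);
      p ^ 0 * (M 1 0), c - p ^ 0 * (M 0 0 - c)] := by
    have e1 : c + p ^ 0 * (M 0 0 - c) = M 0 0 := by ring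
    have e2 : p ^ 0 * (M 0 1) = M 0 1 := by ring
    have e3 : p ^ 0 * (M 1 0) = M 1 0 := by ring
    have e4 : c - p ^ 0 * (M 0 0 - c) = M 1 1 := by
      rw [hc]; linear_combination (M 0 0 + M 1 1) * h2c
    rw [e1, e2, e3, e4]
    exact Matrix.eta_fin_two M
  obtain ⟨j', e, g, hg, hsc, hj2⟩ := H.normal_aux ℓ 0 (by omega) c (M 0 0 - c) (M 0 1) (M 1 0)
  exact ⟨c, j', e, g, hg, by rw [hM]; exact hsc, hj2⟩


lemma unique (H : Hyp p ℓ) {c c' e e' : R} {j j' : ℕ} (hj : j ≤ ℓ) (hj' : j' ≤ ℓ)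
    {g : Matrix (Fin 2) (Fin 2) R} (hg : IsUnit g.det)
    (hsc : Nf p c j (p ^ j * e) * g = g * Nf p c' j' (p ^ j' * e')) :
    c = c' ∧ j = j' ∧ p ^ j * e = p ^ j' * e' := by
  obtain ⟨u, hu⟩ := hg
  have hdet : g.det = g 0 0 * g 1 1 - g 0 1 * g 1 0 := Matrix.det_fin_two g
  rw [Nf, Nf, Matrix.eta_fin_two g, Matrix.mul_fin_two, Matrix.mul_fin_two, fin2_eq_iff] at hsc
  obtain ⟨E11, E12, E21, E22⟩ := hsc
  set a := g 0 0 with ha; set b := g 0 1 with hb0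
  set gc := g 1 0 with hgc; set d := g 1 1 with hd
  have hu' : (↑u : R) = a * d - b * gc := by rw [hu, hdet]
  have hdg : IsUnit (a * d - b * gc) := hu' ▸ u.isUnit
  have hcc : c = c' := by
    refine (H.h2.mul hdg).mul_left_cancel ?_
    linear_combination d * E11 - b * E21 + a * E22 - gc * E12
  subst hcc
  have huinv : (a * d - b * gc) * ↑u⁻¹ = 1 := by rw [← hu']; exact u.mul_inv
  have m1 : p ^ j' * (a * d - b * gc) = p ^ j * (a * a + e * gc * gc) := by
    linear_combination gc * E11 - a * E21
  have m2 : p ^ j * (a * d - b * gc) = p ^ j' * (d * d + e' * gc * gc) := by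
    linear_combination d * E21 - gc * E22
  have hjj : j = j' := by
    rcases lt_trichotomy j j' with hlt | heq | hgt
    · exfalso
      refine H.hstrict j (by omega) ⟨p ^ (j' - (j+1)) * ((d * d + e' * gc * gc) * ↑u⁻¹), ?_⟩
      have h1 : p ^ j' = p ^ (j+1) * p ^ (j' - (j+1)) := by rw [← pow_add]; congr 1; omega
      calc p ^ j = p ^ j * ((a * d - b * gc) * ↑u⁻¹) := by rw [huinv, mul_one]
        _ = (p ^ j * (a * d - b * gc)) * ↑u⁻¹ := by ring
        _ = (p ^ j' * (d * d + e' * gc * gc)) * ↑u⁻¹ := by rw [m2]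
        _ = p ^ (j+1) * (p ^ (j' - (j+1)) * ((d * d + e' * gc * gc) * ↑u⁻¹)) := by
            rw [h1]; ring
    · exact heq
    · exfalso
      refine H.hstrict j' (by omega) ⟨p ^ (j - (j'+1)) * ((a * a + e * gc * gc) * ↑u⁻¹), ?_⟩
      have h1 : p ^ j = p ^ (j'+1) * p ^ (j - (j'+1)) := by rw [← pow_add]; congr 1; omega
      calc p ^ j' = p ^ j' * ((a * d - b * gc) * ↑u⁻¹) := by rw [huinv, mul_one]
        _ = (p ^ j' * (a * d - b * gc)) * ↑u⁻¹ := by ring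
        _ = (p ^ j * (a * a + e * gc * gc)) * ↑u⁻¹ := by rw [m1]
        _ = p ^ (j'+1) * (p ^ (j - (j'+1)) * ((a * a + e * gc * gc) * ↑u⁻¹)) := by
            rw [h1]; ring
  subst hjj
  refine ⟨rfl, rfl, hdg.mul_left_cancel ?_⟩
  linear_combination b * E11 - a * E12 + (a * e') * E21 + b * E22

lemma det_eq_of_semiconj {A B g : Matrix (Fin 2) (Fin 2) R} (hg : IsUnit g.det)
    (h : A * g = g * B) : A.det = B.det := by
  have h1 := congrArg Matrix.det h
  rw [Matrix.det_mul, Matrix.det_mul] at h1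
  exact hg.mul_left_cancel (by linear_combination h1)


lemma isConj_of_semiconj (U V : (Matrix (Fin 2) (Fin 2) R)ˣ) {g : Matrix (Fin 2) (Fin 2) R}
    (hg : IsUnit g.det) (h : g * (U : Matrix (Fin 2) (Fin 2) R) = (V : Matrix (Fin 2) (Fin 2) R) * g) :
    IsConj U V := by
  have hgu : IsUnit g := (Matrix.isUnit_iff_isUnit_det g).mpr hg
  have hEq : hgu.unit * U = V * hgu.unit := by
    apply Units.ext
    simpa only [Units.val_mul, hgu.unit_spec] using h
  exact isConj_iff.mpr ⟨hgu.unit, by rw [mul_inv_eq_iff_eq_mul]; exact hEq⟩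

lemma semiconj_of_isConj (U V : (Matrix (Fin 2) (Fin 2) R)ˣ) (h : IsConj U V) :
    ∃ g : Matrix (Fin 2) (Fin 2) R, IsUnit g.det ∧
      g * (U : Matrix (Fin 2) (Fin 2) R) = (V : Matrix (Fin 2) (Fin 2) R) * g := by
  obtain ⟨w, hw⟩ := isConj_iff.mp h
  have h2 : w * U = V * w := by rw [← hw, inv_mul_cancel_right]
  refine ⟨(w : Matrix (Fin 2) (Fin 2) R), (Matrix.isUnit_iff_isUnit_det _).mp w.isUnit, ?_⟩
  exact congrArg Units.val h2

lemma inv_val_eq {U : (Matrix (Fin 2) (Fin 2) R)ˣ} {X : Matrix (Fin 2) (Fin 2) R}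
    (h1 : (U : Matrix (Fin 2) (Fin 2) R) * X = 1) (h2 : X * (U : Matrix (Fin 2) (Fin 2) R) = 1) :
    ((U⁻¹ : (Matrix (Fin 2) (Fin 2) R)ˣ) : Matrix (Fin 2) (Fin 2) R) = X := by
  have hV : U * (⟨X, U.val, h2, h1⟩ : (Matrix (Fin 2) (Fin 2) R)ˣ) = 1 := by
    apply Units.ext; simpa using h1
  rw [← eq_inv_of_mul_eq_one_right hV]

lemma inv_val_Nf {U : (Matrix (Fin 2) (Fin 2) R)ˣ} {c : R} {j : ℕ} {b : R}
    (hval : (U : Matrix (Fin 2) (Fin 2) R) = Nf p c j b) (δu : Rˣ)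
    (hδ : (δu : R) = c ^ 2 + p ^ j * b) :
    ((U⁻¹ : (Matrix (Fin 2) (Fin 2) R)ˣ) : Matrix (Fin 2) (Fin 2) R)
      = !![↑δu⁻¹ * c, ↑δu⁻¹ * b; -(↑δu⁻¹ * p ^ j), ↑δu⁻¹ * c] := by
  have hmul : (↑δu⁻¹ : R) * ↑δu = 1 := δu.inv_mul
  apply inv_val_eq
  · rw [hval, Nf, Matrix.mul_fin_two, Matrix.one_fin_two, fin2_eq_iff]
    exact ⟨by linear_combination hmul - (↑δu⁻¹ : R) * hδ, by ring, by ring,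
      by linear_combination hmul - (↑δu⁻¹ : R) * hδ⟩
  · rw [hval, Nf, Matrix.mul_fin_two, Matrix.one_fin_two, fin2_eq_iff]
    exact ⟨by linear_combination hmul - (↑δu⁻¹ : R) * hδ, by ring, by ring,
      by linear_combination hmul - (↑δu⁻¹ : R) * hδ⟩

lemma real_conditions (H : Hyp p ℓ) {c e : R} {j : ℕ} (hj : j ≤ ℓ)
    (U : (Matrix (Fin 2) (Fin 2) R)ˣ)
    (hval : (U : Matrix (Fin 2) (Fin 2) R) = Nf p c j (p ^ j * e))
    (hconj : IsConj U U⁻¹) :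
    c * ((c ^ 2 + p ^ j * (p ^ j * e)) - 1) = 0 ∧
      (p ^ j * e) * ((c ^ 2 + p ^ j * (p ^ j * e)) ^ 2 - 1) = 0 := by
  have hδu : IsUnit (c ^ 2 + p ^ j * (p ^ j * e)) := by
    rw [← det_Nf, ← hval]
    exact (Matrix.isUnit_iff_isUnit_det _).mp U.isUnit
  obtain ⟨δu, hδ⟩ := hδu
  have hmul : (↑δu⁻¹ : R) * ↑δu = 1 := δu.inv_mul
  have hmul' : (↑δu : R) * ↑δu⁻¹ = 1 := δu.mul_inv
  have hUinv := inv_val_Nf hval δu hδ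
  obtain ⟨g, hg, hsc⟩ := semiconj_of_isConj U U⁻¹ hconj
  have hk : !![(1:R), 0; 0, -↑δu] * ((U⁻¹ : (Matrix (Fin 2) (Fin 2) R)ˣ) : Matrix (Fin 2) (Fin 2) R)
      = Nf p (↑δu⁻¹ * c) j (p ^ j * (e * (↑δu⁻¹ * ↑δu⁻¹))) * !![(1:R), 0; 0, -↑δu] := by
    rw [hUinv, Nf, Matrix.mul_fin_two, Matrix.mul_fin_two, fin2_eq_iff]
    refine ⟨by ring, ?_, ?_, by ring⟩
    · linear_combination (-((↑δu⁻¹ : R) * p ^ j * e)) * hmul'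
    · linear_combination (p^j : R) * hmul
  have hsc2 : Nf p (↑δu⁻¹ * c) j (p ^ j * (e * (↑δu⁻¹ * ↑δu⁻¹))) * (!![(1:R), 0; 0, -↑δu] * g)
      = (!![(1:R), 0; 0, -↑δu] * g) * Nf p c j (p ^ j * e) := by
    calc Nf p (↑δu⁻¹ * c) j (p ^ j * (e * (↑δu⁻¹ * ↑δu⁻¹))) * (!![(1:R), 0; 0, -↑δu] * g)
        = (Nf p (↑δu⁻¹ * c) j (p ^ j * (e * (↑δu⁻¹ * ↑δu⁻¹))) * !![(1:R), 0; 0, -↑δu]) * g := by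
          rw [mul_assoc]
      _ = (!![(1:R), 0; 0, -↑δu] * ((U⁻¹ : (Matrix (Fin 2) (Fin 2) R)ˣ) : Matrix (Fin 2) (Fin 2) R)) * g := by rw [hk]
      _ = !![(1:R), 0; 0, -↑δu] * (((U⁻¹ : (Matrix (Fin 2) (Fin 2) R)ˣ) : Matrix (Fin 2) (Fin 2) R) * g) := by rw [mul_assoc]
      _ = !![(1:R), 0; 0, -↑δu] * (g * (U : Matrix (Fin 2) (Fin 2) R)) := by rw [← hsc]
      _ = (!![(1:R), 0; 0, -↑δu] * g) * (U : Matrix (Fin 2) (Fin 2) R) := by rw [mul_assoc]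
      _ = (!![(1:R), 0; 0, -↑δu] * g) * Nf p c j (p ^ j * e) := by rw [hval]
  have hdetkg : IsUnit (!![(1:R), 0; 0, -↑δu] * g).det := by
    rw [Matrix.det_mul]
    have : (!![(1:R), 0; 0, -↑δu]).det = -↑δu := by
      simp [Matrix.det_fin_two_of]
    rw [this]
    exact (δu.isUnit.neg).mul hg
  obtain ⟨hc1, _, hb1⟩ := H.unique hj hj hdetkg hsc2
  constructor
  · linear_combination (-c) * hδ + (-(↑δu : R)) * hc1 + c * hmul
  · linear_combination (-((p^j*e) * ((c^2+p^j*(p^j*e)) + ↑δu))) * hδ + (-(↑δu : R)*↑δu) * hb1 +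
      ((p^j*e) * ((↑δu : R)*(↑δu⁻¹ : R) + 1)) * hmul'


end Hyp

section GroupLemmas
variable {G : Type*} [Group G]

lemma isConj_inv {a b : G} (h : IsConj a b) : IsConj a⁻¹ b⁻¹ := by
  obtain ⟨w, hw⟩ := isConj_iff.mp h
  exact isConj_iff.mpr ⟨w, by rw [← hw]; group⟩

lemma strongly_real_transport {a b : G} (h : IsConj b a)
    (hb : ∃ h0 : G, h0 ^ 2 = 1 ∧ h0 * b * h0⁻¹ = b⁻¹) :
    ∃ h0 : G, h0 ^ 2 = 1 ∧ h0 * a * h0⁻¹ = a⁻¹ := by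
  obtain ⟨w, hw⟩ := isConj_iff.mp h
  obtain ⟨h0, h2, hc⟩ := hb
  refine ⟨w * h0 * w⁻¹, ?_, ?_⟩
  · have e1 : (w * h0 * w⁻¹) ^ 2 = w * h0 ^ 2 * w⁻¹ := by
      rw [sq, sq]; simp only [mul_assoc, inv_mul_cancel_left]
    rw [e1, h2]; group
  · rw [← hw]
    have e2 : w * h0 * w⁻¹ * (w * b * w⁻¹) * (w * h0 * w⁻¹)⁻¹ = w * (h0 * b * h0⁻¹) * w⁻¹ := by
      group
    rw [e2, hc]; group

lemma real_class_iff (U : G) :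
    (∀ a ∈ (ConjClasses.mk U).carrier, IsConj a a⁻¹) ↔ IsConj U U⁻¹ := by
  constructor
  · intro h
    exact h U (ConjClasses.mem_carrier_iff_mk_eq.mpr rfl)
  · intro h a ha
    have haU : IsConj a U :=
      ConjClasses.mk_eq_mk_iff_isConj.mp (ConjClasses.mem_carrier_iff_mk_eq.mp ha)
    exact (haU.trans h).trans (isConj_inv haU.symm)

lemma strong_class_iff (U : G) :
    (∀ a ∈ (ConjClasses.mk U).carrier, ∃ h : G, h ^ 2 = 1 ∧ h * a * h⁻¹ = a⁻¹) ↔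
      (∃ h : G, h ^ 2 = 1 ∧ h * U * h⁻¹ = U⁻¹) := by
  constructor
  · intro h
    exact h U (ConjClasses.mem_carrier_iff_mk_eq.mpr rfl)
  · intro h a ha
    have haU : IsConj a U :=
      ConjClasses.mk_eq_mk_iff_isConj.mp (ConjClasses.mem_carrier_iff_mk_eq.mp ha)
    exact strongly_real_transport haU.symm h

lemma real_of_strong {U : G} (h : ∃ h0 : G, h0 ^ 2 = 1 ∧ h0 * U * h0⁻¹ = U⁻¹) :
    IsConj U U⁻¹ :=
  let ⟨h0, _, hc⟩ := h
  isConj_iff.mpr ⟨h0, hc⟩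

end GroupLemmas

/-- canonical unit with determinant one -/
def unitNf (p : R) (c : R) (j : ℕ) (e : R) (hδ : c ^ 2 + p ^ j * (p ^ j * e) = 1) :
    (Matrix (Fin 2) (Fin 2) R)ˣ where
  val := Nf p c j (p ^ j * e)
  inv := !![c, p ^ j * e; -(p ^ j), c]
  val_inv := by
    rw [Nf, Matrix.mul_fin_two, Matrix.one_fin_two, fin2_eq_iff]
    exact ⟨by linear_combination hδ, by ring, by ring, by linear_combination hδ⟩
  inv_val := by
    rw [Nf, Matrix.mul_fin_two, Matrix.one_fin_two, fin2_eq_iff]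
    exact ⟨by linear_combination hδ, by ring, by ring, by linear_combination hδ⟩

lemma unitNf_val (p c : R) (j : ℕ) (e : R) (hδ) :
    (unitNf p c j e hδ : Matrix (Fin 2) (Fin 2) R) = Nf p c j (p ^ j * e) := rfl

/-- the special involution class -/
def Wu : (Matrix (Fin 2) (Fin 2) R)ˣ where
  val := !![0, 1; 1, 0]
  inv := !![0, 1; 1, 0]
  val_inv := by
    rw [Matrix.mul_fin_two, Matrix.one_fin_two, fin2_eq_iff]
    exact ⟨by ring, by ring, by ring, by ring⟩
  inv_val := by
    rw [Matrix.mul_fin_two, Matrix.one_fin_two, fin2_eq_iff]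
    exact ⟨by ring, by ring, by ring, by ring⟩

lemma Wu_sq : (Wu (R := R)) * Wu = 1 := by
  apply Units.ext
  rw [Units.val_mul, Units.val_one]
  exact Wu.val_inv

namespace Hyp
variable {p : R} {ℓ : ℕ}

lemma strongly_real_of_sq_one (U : (Matrix (Fin 2) (Fin 2) R)ˣ) (h : U * U = 1) :
    ∃ h0 : (Matrix (Fin 2) (Fin 2) R)ˣ, h0 ^ 2 = 1 ∧ h0 * U * h0⁻¹ = U⁻¹ := by
  refine ⟨1, by rw [sq, mul_one], ?_⟩
  rw [one_mul, inv_one, mul_one]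
  exact eq_inv_of_mul_eq_one_right h

lemma strongly_real_Nf_det_one (U : (Matrix (Fin 2) (Fin 2) R)ˣ) {c b : R} {j : ℕ}
    (hval : (U : Matrix (Fin 2) (Fin 2) R) = Nf p c j b) (hδ : c ^ 2 + p ^ j * b = 1) :
    ∃ h : (Matrix (Fin 2) (Fin 2) R)ˣ, h ^ 2 = 1 ∧ h * U * h⁻¹ = U⁻¹ := by
  have hh : (!![(1:R), 0; 0, -1]) * (!![(1:R), 0; 0, -1]) = 1 := by
    rw [Matrix.mul_fin_two, Matrix.one_fin_two, fin2_eq_iff]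
    exact ⟨by ring, by ring, by ring, by ring⟩
  refine ⟨⟨!![(1:R), 0; 0, -1], !![(1:R), 0; 0, -1], hh, hh⟩, ?_, ?_⟩
  · apply Units.ext
    rw [sq, Units.val_mul, Units.val_one]
    exact hh
  · have hinv : (⟨!![(1:R), 0; 0, -1], !![(1:R), 0; 0, -1], hh, hh⟩ :
        (Matrix (Fin 2) (Fin 2) R)ˣ)⁻¹ = ⟨!![(1:R), 0; 0, -1], !![(1:R), 0; 0, -1], hh, hh⟩ := by
      refine (eq_inv_of_mul_eq_one_right ?_).symm
      apply Units.ext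
      rw [Units.val_mul, Units.val_one]
      exact hh
    rw [hinv]
    apply Units.ext
    have hUinv := inv_val_Nf hval 1 (by rw [Units.val_one]; exact hδ.symm)
    simp only [inv_one, Units.val_one, one_mul] at hUinv
    rw [Units.val_mul, Units.val_mul, hUinv, hval, Nf, Matrix.mul_fin_two, Matrix.mul_fin_two,
      fin2_eq_iff]
    exact ⟨by ring, by ring, by ring, by ring⟩

lemma real_class_classify (H : Hyp p ℓ) (U : (Matrix (Fin 2) (Fin 2) R)ˣ)
    (hreal : IsConj U U⁻¹) :
    (IsConj U 1 ∨ IsConj U (-1) ∨ IsConj U Wu) ∨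
      (∃ (c e : R) (j : ℕ), j < ℓ ∧ ∃ hδ : c ^ 2 + p ^ j * (p ^ j * e) = 1,
        IsConj U (unitNf p c j e hδ)) := by
  have hnt : Nontrivial R := nontrivial_of_ne 1 0 H.hnt
  obtain ⟨c, j, e, g, hg, hsc, hjl⟩ := H.normal_form (U : Matrix (Fin 2) (Fin 2) R)
  have hdN : IsUnit (Nf p c j (p ^ j * e)).det := by
    rw [← det_eq_of_semiconj hg hsc]
    exact (Matrix.isUnit_iff_isUnit_det _).mp U.isUnit
  have hNu : IsUnit (Nf p c j (p ^ j * e)) := (Matrix.isUnit_iff_isUnit_det _).mpr hdN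
  have hUV : IsConj U hNu.unit := by
    refine (isConj_of_semiconj hNu.unit U hg ?_).symm
    rw [hNu.unit_spec]
    exact hsc.symm
  have hVreal : IsConj hNu.unit hNu.unit⁻¹ :=
    (hUV.symm.trans hreal).trans (isConj_inv hUV)
  obtain ⟨cond1, cond2⟩ := H.real_conditions hjl hNu.unit hNu.unit_spec hVreal
  have hδu : IsUnit (c ^ 2 + p ^ j * (p ^ j * e)) := by rw [← det_Nf]; exact hdN
  rcases H.hloc (c ^ 2 + p ^ j * (p ^ j * e) - 1) with hu | ⟨y, hy⟩
  · -- δ - 1 unit : forces c = 0, j = 0, e = -1, the Wu class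
    have hc0 : c = 0 := by
      refine hu.mul_left_cancel ?_
      linear_combination cond1
    rcases j with _ | j'
    · have he : e = c ^ 2 + p ^ 0 * (p ^ 0 * e) := by rw [hc0]; ring
      have hδ2 : (c ^ 2 + p ^ 0 * (p ^ 0 * e)) ^ 2 = 1 := by
        refine hδu.mul_left_cancel ?_
        rw [← he] at cond2 ⊢
        linear_combination cond2
      have hδm1 : c ^ 2 + p ^ 0 * (p ^ 0 * e) = -1 := by
        refine hu.mul_left_cancel ?_
        linear_combination hδ2
      have hVW : hNu.unit = Wu := by
        apply Units.ext
        rw [hNu.unit_spec]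
        show Nf p c 0 (p ^ 0 * e) = (Wu (R := R)).val
        have he2 : e = -1 := by rw [he]; exact hδm1
        rw [Nf, hc0, he2]
        show !![0, -(p^0 * -1); p ^ 0, 0] = !![0,1;1,0]
        rw [fin2_eq_iff]
        exact ⟨rfl, by ring, by ring, rfl⟩
      exact Or.inl (Or.inr (Or.inr (hVW ▸ hUV)))
    · exfalso
      have : c ^ 2 + p ^ (j'+1) * (p ^ (j'+1) * e) = p * (p ^ j' * (p ^ (j'+1) * e)) := by
        rw [hc0]; ring
      exact H.not_unit_p_mul _ (this ▸ hδu)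
  · -- δ = 1
    have hup1 : IsUnit (c ^ 2 + p ^ j * (p ^ j * e) + 1) := by
      have : c ^ 2 + p ^ j * (p ^ j * e) + 1 = 2 + p * y := by linear_combination hy
      rw [this]; exact H.unit_add H.h2 y
    have hb1 : (p ^ j * e) * (c ^ 2 + p ^ j * (p ^ j * e) - 1) = 0 := by
      refine hup1.mul_left_cancel ?_
      linear_combination cond2
    have hδ1 : c ^ 2 + p ^ j * (p ^ j * e) = 1 := by
      have h3 : (c ^ 2 + p ^ j * (p ^ j * e)) * (c ^ 2 + p ^ j * (p ^ j * e) - 1) = 0 := by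
        linear_combination c * cond1 + p ^ j * hb1
      have h4 : c ^ 2 + p ^ j * (p ^ j * e) - 1 = 0 :=
        hδu.mul_left_cancel (by rw [mul_zero]; exact h3)
      linear_combination h4
    rcases lt_or_ge j ℓ with hjlt | hjge
    · exact Or.inr ⟨c, e, j, hjlt, hδ1, by
        have : hNu.unit = unitNf p c j e hδ1 := by
          apply Units.ext
          rw [hNu.unit_spec, unitNf_val]
        exact this ▸ hUV⟩
    · -- scalar case
      have hpj : p ^ j = 0 := H.pow_zero_of_le hjge
      have hc2 : c ^ 2 = 1 ^ 2 := by rw [one_pow, ← hδ1, hpj]; ring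
      have hm1 : (-(1) : Matrix (Fin 2) (Fin 2) R) = !![-1, 0; 0, -1] := by
        ext i j'
        fin_cases i <;> fin_cases j' <;> simp
      rcases H.two_roots hc2 (by simpa using H.h2) with hc1 | hcm1
      · have hV1 : hNu.unit = 1 := by
          apply Units.ext
          rw [hNu.unit_spec, Nf, hpj, hc1, Units.val_one, Matrix.one_fin_two, fin2_eq_iff]
          exact ⟨rfl, by ring, rfl, rfl⟩
        exact Or.inl (Or.inl (hV1 ▸ hUV))
      · have hVm1 : hNu.unit = -1 := by
          apply Units.ext
          rw [hNu.unit_spec, Nf, hpj, hcm1, Units.val_neg, Units.val_one, hm1, fin2_eq_iff]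
          exact ⟨rfl, by ring, rfl, rfl⟩
        exact Or.inl (Or.inr (Or.inl (hVm1 ▸ hUV)))

lemma isConj_Nf_eq (H : Hyp p ℓ) {U V : (Matrix (Fin 2) (Fin 2) R)ˣ} {c c' e e' : R} {j j' : ℕ}
    (hj : j ≤ ℓ) (hj' : j' ≤ ℓ)
    (hU : (U : Matrix (Fin 2) (Fin 2) R) = Nf p c j (p ^ j * e))
    (hV : (V : Matrix (Fin 2) (Fin 2) R) = Nf p c' j' (p ^ j' * e'))
    (h : IsConj U V) : c = c' ∧ j = j' ∧ p ^ j * e = p ^ j' * e' := by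
  obtain ⟨g, hg, hsc⟩ := semiconj_of_isConj U V h
  rw [hU, hV] at hsc
  obtain ⟨h1, h2, h3⟩ := H.unique hj' hj hg hsc.symm
  exact ⟨h1.symm, h2.symm, h3.symm⟩

lemma Nf_one (H : Hyp p ℓ) : Nf p 1 ℓ (p ^ ℓ * 0) = 1 := by
  rw [Nf, H.hp, Matrix.one_fin_two, fin2_eq_iff]
  exact ⟨rfl, by ring, rfl, rfl⟩

lemma Nf_neg_one (H : Hyp p ℓ) : Nf p (-1) ℓ (p ^ ℓ * 0) = -1 := by
  have hm1 : (-(1) : Matrix (Fin 2) (Fin 2) R) = !![-1, 0; 0, -1] := by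
    ext i j'
    fin_cases i <;> fin_cases j' <;> simp
  rw [Nf, H.hp, hm1, fin2_eq_iff]
  exact ⟨rfl, by ring, rfl, rfl⟩

lemma Nf_W : Nf p 0 0 (p ^ 0 * (-1)) = (Wu (R := R)).val := by
  rw [Nf]
  show _ = !![0, 1; 1, 0]
  rw [fin2_eq_iff]
  exact ⟨rfl, by ring, by rw [pow_zero], rfl⟩

lemma sqrt_exists' (H : Hyp p ℓ) (j : ℕ) (hj : 1 ≤ j) (E : R) :
    ∃ c : R, (∃ d, c = 1 + p * d) ∧ c ^ 2 + p ^ j * (p ^ j * E) = 1 := by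
  obtain ⟨c, d, h1, h2⟩ := H.sqrt_exists j hj E
  exact ⟨c, ⟨d, h1⟩, by linear_combination h2⟩

noncomputable def sqrtU (H : Hyp p ℓ) (j : ℕ) (E : R) : R :=
  if hj : 1 ≤ j then (H.sqrt_exists' j hj E).choose else 0

lemma sqrtU_unit (H : Hyp p ℓ) {j : ℕ} (hj : 1 ≤ j) (E : R) : ∃ d, H.sqrtU j E = 1 + p * d := by
  rw [sqrtU, dif_pos hj]
  exact (H.sqrt_exists' j hj E).choose_spec.1

lemma sqrtU_sq (H : Hyp p ℓ) {j : ℕ} (hj : 1 ≤ j) (E : R) :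
    (H.sqrtU j E) ^ 2 + p ^ j * (p ^ j * E) = 1 := by
  rw [sqrtU, dif_pos hj]
  exact (H.sqrt_exists' j hj E).choose_spec.2

lemma sqrtU_isUnit2 (H : Hyp p ℓ) {j : ℕ} (hj : 1 ≤ j) (E : R) :
    IsUnit (2 * H.sqrtU j E) := by
  obtain ⟨d, hd⟩ := H.sqrtU_unit hj E
  exact H.h2.mul (by rw [hd]; exact H.unit_add isUnit_one d)

lemma one_ne_neg_one (H : Hyp p ℓ) : (1 : R) ≠ -1 := by
  intro h
  have h2 : (2 : R) = 0 := by linear_combination h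
  have := H.h2
  rw [h2, isUnit_zero_iff] at this
  exact H.hnt this.symm

lemma unit_ne_zero (H : Hyp p ℓ) {x : R} (hx : IsUnit x) : x ≠ 0 := by
  intro h
  rw [h, isUnit_zero_iff] at hx
  exact H.hnt hx.symm

end Hyp

section Inst
open IsLocalRing

variable {O : Type} [CommRing O] [IsDomain O] [IsDiscreteValuationRing O] {π : O}

lemma pi_not_unit (hπ : maximalIdeal O = Ideal.span {π}) : ¬ IsUnit π := by
  intro h
  have : maximalIdeal O = ⊤ := by rw [hπ, Ideal.span_singleton_eq_top]; exact h
  exact (maximalIdeal.isMaximal O).ne_top this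

lemma pi_ne_zero (hπ : maximalIdeal O = Ideal.span {π}) : π ≠ 0 := by
  intro h
  refine IsDiscreteValuationRing.not_a_field O ?_
  rw [hπ, h, Ideal.span_singleton_eq_bot]

lemma pi_pow_dvd (hπ : maximalIdeal O = Ideal.span {π}) {m j : ℕ} (hj : j ≤ m) {x : O} (h : π ^ m ∣ π ^ j * x) : π ^ (m - j) ∣ x := by
  have h1 : π ^ m = π ^ j * π ^ (m - j) := by rw [← pow_add]; congr 1; omega
  rw [h1] at h
  exact (mul_dvd_mul_iff_left (pow_ne_zero j (pi_ne_zero hπ))).mp h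

lemma mk_eq_zero_iff {m : ℕ} {x : O} :
    Ideal.Quotient.mk (Ideal.span {π} ^ m) x = 0 ↔ π ^ m ∣ x := by
  rw [Ideal.Quotient.eq_zero_iff_mem, Ideal.span_singleton_pow, Ideal.mem_span_singleton]

lemma two_unit_O (hπ : maximalIdeal O = Ideal.span {π}) [Finite (ResidueField O)] (hodd : Odd (ringChar (ResidueField O))) :
    IsUnit (2 : O) := by
  by_contra h2
  have hmem : (2 : O) ∈ maximalIdeal O := h2
  have hres : (2 : ResidueField O) = 0 := by
    have h0 := (Ideal.Quotient.eq_zero_iff_mem).mpr hmem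
    rw [show (2 : ResidueField O) = Ideal.Quotient.mk (maximalIdeal O) (2 : O) from
      (map_ofNat (Ideal.Quotient.mk (maximalIdeal O)) 2).symm]
    exact h0
  have hdvd : ringChar (ResidueField O) ∣ 2 :=
    (CharP.cast_eq_zero_iff (ResidueField O) (ringChar (ResidueField O)) 2).mp
      (by exact_mod_cast hres)
  rcases (Nat.dvd_prime Nat.prime_two).mp hdvd with h | h
  · exact CharP.ringChar_ne_one h
  · rw [h] at hodd
    exact (by decide : ¬ Odd 2) hodd

variable (ℓ : ℕ)

lemma hyp_holds (hπ : maximalIdeal O = Ideal.span {π}) [Finite (ResidueField O)] (hodd : Odd (ringChar (ResidueField O))) (hℓ : 1 ≤ ℓ) :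
    GL2RC.Hyp (Ideal.Quotient.mk (Ideal.span {π} ^ ℓ) π) ℓ := by
  set p := Ideal.Quotient.mk (Ideal.span {π} ^ ℓ) π with hp
  have hmk : ∀ j : ℕ, p ^ j = Ideal.Quotient.mk (Ideal.span {π} ^ ℓ) (π ^ j) := by
    intro j; rw [hp, map_pow]
  have hnt : Nontrivial (O ⧸ Ideal.span {π} ^ ℓ) := by
    refine Ideal.Quotient.nontrivial_iff.mpr ?_
    rw [Ideal.span_singleton_pow, Ne, Ideal.span_singleton_eq_top]
    intro h
    exact pi_not_unit hπ ((isUnit_pow_iff (by omega)).mp h)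
  refine ⟨?_, ?_, ?_, ?_, ?_, hℓ⟩
  · rw [hmk, mk_eq_zero_iff]
  · intro x
    obtain ⟨x₀, rfl⟩ := Ideal.Quotient.mk_surjective x
    by_cases hx : IsUnit x₀
    · exact Or.inl (hx.map (Ideal.Quotient.mk (Ideal.span {π} ^ ℓ)))
    · right
      have : x₀ ∈ maximalIdeal O := hx
      rw [hπ, Ideal.mem_span_singleton] at this
      obtain ⟨y, hy⟩ := this
      exact ⟨Ideal.Quotient.mk _ y,
        by rw [hy, map_mul (Ideal.Quotient.mk (Ideal.span {π} ^ ℓ)) π y, hp]⟩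
  · exact ((two_unit_O hπ hodd).map (Ideal.Quotient.mk (Ideal.span {π} ^ ℓ)))
  · intro j hj ⟨y, hy⟩
    obtain ⟨y₀, rfl⟩ := Ideal.Quotient.mk_surjective y
    rw [hmk, hmk, ← _root_.map_mul, ← sub_eq_zero, ← map_sub, mk_eq_zero_iff] at hy
    obtain ⟨t, ht⟩ := hy
    have h1 : π ^ j * (1 - π * y₀ - π ^ (ℓ - j) * t) = 0 := by
      have hll : π ^ j * (π ^ (ℓ - j) * t) = π ^ ℓ * t := by
        rw [← mul_assoc, ← pow_add]; congr 2; omega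
      have hjj : π ^ j * (π * y₀) = π ^ (j+1) * y₀ := by rw [← mul_assoc, ← pow_succ]
      calc π ^ j * (1 - π * y₀ - π ^ (ℓ - j) * t)
          = (π ^ j - π ^ (j+1) * y₀) - π ^ ℓ * t := by rw [mul_sub, mul_sub, hjj, hll, mul_one]
        _ = 0 := by rw [ht]; ring
    have h2 : 1 - π * y₀ - π ^ (ℓ - j) * t = 0 :=
      (mul_eq_zero.mp h1).resolve_left (pow_ne_zero j (pi_ne_zero hπ))
    have h3 : π * (y₀ + π ^ (ℓ - j - 1) * t) = 1 := by
      have : π * (π ^ (ℓ - j - 1) * t) = π ^ (ℓ - j) * t := by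
        rw [← mul_assoc, ← pow_succ']; congr 2; omega
      rw [mul_add, this]
      linear_combination -h2
    exact pi_not_unit hπ (IsUnit.of_mul_eq_one _ h3)
  · exact one_ne_zero

lemma card_quot_pow (hπ : maximalIdeal O = Ideal.span {π}) [Finite (ResidueField O)] (m : ℕ) :
    Nat.card (O ⧸ Ideal.span {π} ^ m) = (Nat.card (ResidueField O)) ^ m := by
  have hprime : (Ideal.span {π}).IsPrime := by
    rw [← hπ]; exact (maximalIdeal.isMaximal O).isPrime
  have hbot : Ideal.span {π} ≠ ⊥ := by
    rw [Ne, Ideal.span_singleton_eq_bot]; exact pi_ne_zero hπ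
  have h1 : Nat.card (O ⧸ Ideal.span {π} ^ m) = Submodule.cardQuot (Ideal.span {π} ^ m) :=
    (Submodule.cardQuot_apply _).symm
  rw [h1, cardQuot_pow_of_prime hbot, Submodule.cardQuot_apply]
  congr 1
  exact Nat.card_congr (Ideal.quotEquivOfEq hπ.symm).toEquiv

section Defs
variable {O : Type} [CommRing O] [IsDomain O] [IsDiscreteValuationRing O] {π : O}

/-- index type for real conjugacy classes -/
def Idx (O : Type) [CommRing O] (π : O) (n : ℕ) : Type :=
  ((Fin 2 ⊕ Unit) ⊕ (O ⧸ Ideal.span {π} ^ (n+1))) ⊕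
    ((j : Fin n) × (Fin 2 × (O ⧸ Ideal.span {π} ^ (n - (j : ℕ)))))

noncomputable def sigm (m : ℕ) (x : O ⧸ Ideal.span {π} ^ m) : O :=
  Function.surjInv Ideal.Quotient.mk_surjective x

lemma sigm_spec (m : ℕ) (x : O ⧸ Ideal.span {π} ^ m) :
    Ideal.Quotient.mk (Ideal.span {π} ^ m) (sigm m x) = x :=
  Function.surjInv_eq _ x

noncomputable def Elift (n m : ℕ) (x : O ⧸ Ideal.span {π} ^ m) :
    O ⧸ Ideal.span {π} ^ (n+1) :=
  Ideal.Quotient.mk _ (sigm m x)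

lemma pmul_eq (hπ : IsLocalRing.maximalIdeal O = Ideal.span {π}) {n m j : ℕ} (hm : j + m = n + 1)
    {a b : O} (hab : Ideal.Quotient.mk (Ideal.span {π} ^ m) a = Ideal.Quotient.mk _ b) :
    Ideal.Quotient.mk (Ideal.span {π} ^ (n+1)) (π ^ j * a)
      = Ideal.Quotient.mk (Ideal.span {π} ^ (n+1)) (π ^ j * b) := by
  rw [← sub_eq_zero, ← map_sub, mk_eq_zero_iff]
  rw [← sub_eq_zero, ← map_sub, mk_eq_zero_iff] at hab
  obtain ⟨t, ht⟩ := hab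
  refine ⟨t, ?_⟩
  calc π ^ j * a - π ^ j * b = π ^ j * (a - b) := by ring
    _ = π ^ j * (π ^ m * t) := by rw [ht]
    _ = π ^ (n+1) * t := by rw [← mul_assoc, ← pow_add, hm]

lemma Elift_inj (hπ : IsLocalRing.maximalIdeal O = Ideal.span {π}) {n m j : ℕ}
    (hm : j + m = n + 1) {x x' : O ⧸ Ideal.span {π} ^ m}
    (h : (Ideal.Quotient.mk (Ideal.span {π} ^ (n+1)) π) ^ j * Elift n m x
      = (Ideal.Quotient.mk (Ideal.span {π} ^ (n+1)) π) ^ j * Elift n m x') : x = x' := by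
  rw [Elift, Elift, ← map_pow, ← _root_.map_mul, ← _root_.map_mul, ← sub_eq_zero, ← map_sub,
    mk_eq_zero_iff] at h
  have h2 : π ^ j * sigm m x - π ^ j * sigm m x' = π ^ j * (sigm m x - sigm m x') := by ring
  rw [h2] at h
  have h3 : π ^ m ∣ sigm m x - sigm m x' := by
    have := pi_pow_dvd hπ (m := n+1) (j := j) (by omega) h
    have hmm : n + 1 - j = m := by omega
    rwa [hmm] at this
  obtain ⟨t, ht⟩ := h3
  rw [← sigm_spec m x, ← sigm_spec m x', ← sub_eq_zero, ← map_sub, mk_eq_zero_iff]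
  exact ⟨t, ht⟩

lemma Elift_mul (hπ : IsLocalRing.maximalIdeal O = Ideal.span {π}) {n m j : ℕ}
    (hm : j + m = n + 1) (e : O ⧸ Ideal.span {π} ^ (n+1)) :
    (Ideal.Quotient.mk (Ideal.span {π} ^ (n+1)) π) ^ j
        * Elift n m (Ideal.Quotient.mk (Ideal.span {π} ^ m) (sigm (n+1) e))
      = (Ideal.Quotient.mk (Ideal.span {π} ^ (n+1)) π) ^ j * e := by
  conv_rhs => rw [← sigm_spec (n+1) e]
  rw [Elift, ← map_pow, ← _root_.map_mul, ← _root_.map_mul]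
  exact pmul_eq hπ hm (by rw [sigm_spec])

variable (hπ : IsLocalRing.maximalIdeal O = Ideal.span {π}) [Finite (IsLocalRing.ResidueField O)]
  (hodd : Odd (ringChar (IsLocalRing.ResidueField O))) (n : ℕ)

noncomputable def cOf : Idx O π n → O ⧸ Ideal.span {π} ^ (n+1)
  | Sum.inl (Sum.inl (Sum.inl s)) => if s = 0 then 1 else -1
  | Sum.inl (Sum.inl (Sum.inr _)) => 0
  | Sum.inl (Sum.inr c) => c
  | Sum.inr ⟨j, s, x⟩ =>
      if s = 0 then (hyp_holds (n+1) hπ hodd (by omega)).sqrtU (j+1) (Elift n (n - j) x)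
      else -((hyp_holds (n+1) hπ hodd (by omega)).sqrtU (j+1) (Elift n (n - j) x))

def jOf : Idx O π n → ℕ
  | Sum.inl (Sum.inl (Sum.inl _)) => n + 1
  | Sum.inl (Sum.inl (Sum.inr _)) => 0
  | Sum.inl (Sum.inr _) => 0
  | Sum.inr ⟨j, _, _⟩ => j + 1

noncomputable def eOf : Idx O π n → O ⧸ Ideal.span {π} ^ (n+1)
  | Sum.inl (Sum.inl (Sum.inl _)) => 0
  | Sum.inl (Sum.inl (Sum.inr _)) => -1
  | Sum.inl (Sum.inr c) => 1 - c^2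
  | Sum.inr ⟨j, _, x⟩ => Elift n (n - j) x

lemma jOf_le (i : Idx O π n) : jOf n i ≤ n + 1 := by
  rcases i with ((s | u) | c) | ⟨j, s, x⟩ <;> simp [jOf] <;> omega

noncomputable def Fu : Idx O π n → (Matrix (Fin 2) (Fin 2) (O ⧸ Ideal.span {π} ^ (n+1)))ˣ
  | Sum.inl (Sum.inl (Sum.inl s)) => if s = 0 then 1 else -1
  | Sum.inl (Sum.inl (Sum.inr _)) => Wu
  | Sum.inl (Sum.inr c) =>
      unitNf (Ideal.Quotient.mk (Ideal.span {π} ^ (n+1)) π) c 0 (1 - c^2) (by ring)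
  | Sum.inr ⟨j, s, x⟩ =>
      if hs : s = 0 then
        unitNf (Ideal.Quotient.mk (Ideal.span {π} ^ (n+1)) π)
          ((hyp_holds (n+1) hπ hodd (by omega)).sqrtU (j+1) (Elift n (n - j) x)) (j+1)
          (Elift n (n - j) x)
          ((hyp_holds (n+1) hπ hodd (by omega)).sqrtU_sq (by omega) _)
      else
        unitNf (Ideal.Quotient.mk (Ideal.span {π} ^ (n+1)) π)
          (-((hyp_holds (n+1) hπ hodd (by omega)).sqrtU (j+1) (Elift n (n - j) x))) (j+1)
          (Elift n (n - j) x)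
          (by
            have := (hyp_holds (n+1) hπ hodd (by omega)).sqrtU_sq (j := (j:ℕ)+1) (by omega)
              (Elift n (n - j) x)
            linear_combination this)

lemma Fu_val (i : Idx O π n) :
    (Fu hπ hodd n i : Matrix (Fin 2) (Fin 2) (O ⧸ Ideal.span {π} ^ (n+1)))
      = Nf (Ideal.Quotient.mk (Ideal.span {π} ^ (n+1)) π) (cOf hπ hodd n i) (jOf n i)
          ((Ideal.Quotient.mk (Ideal.span {π} ^ (n+1)) π) ^ (jOf n i) * eOf n i) := by
  have H := hyp_holds (n+1) hπ hodd (by omega)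
  rcases i with ((s | u) | c) | ⟨j, s, x⟩
  · rcases eq_or_ne s 0 with rfl | hs
    · simp only [Fu, cOf, jOf, eOf, if_pos rfl, if_true, dite_true, eq_self_iff_true]
      rw [Units.val_one, H.Nf_one]
    · simp only [Fu, cOf, jOf, eOf, if_neg hs]
      rw [Units.val_neg, Units.val_one, H.Nf_neg_one]
  · simp only [Fu, cOf, jOf, eOf]
    exact Hyp.Nf_W.symm
  · rfl
  · rcases eq_or_ne s 0 with rfl | hs
    · simp only [Fu, cOf, jOf, eOf, dif_pos rfl, if_pos rfl]
      rfl
    · simp only [Fu, cOf, jOf, eOf, dif_neg hs, if_neg hs]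
      rfl

lemma Fu_strong (i : Idx O π n) :
    ∃ h, h ^ 2 = 1 ∧ h * Fu hπ hodd n i * h⁻¹ = (Fu hπ hodd n i)⁻¹ := by
  have H := hyp_holds (n+1) hπ hodd (by omega)
  rcases i with ((s | u) | c) | ⟨j, s, x⟩
  · rcases eq_or_ne s 0 with rfl | hs
    · simp only [Fu, if_pos rfl]
      exact Hyp.strongly_real_of_sq_one 1 (mul_one 1)
    · simp only [Fu, if_neg hs]
      exact Hyp.strongly_real_of_sq_one (R := O ⧸ Ideal.span {π} ^ (n+1)) (-1) (by rw [neg_mul_neg, one_mul])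
  · exact Hyp.strongly_real_of_sq_one Wu Wu_sq
  · exact Hyp.strongly_real_Nf_det_one _ rfl (by ring)
  · rcases eq_or_ne s 0 with rfl | hs
    · simp only [Fu, dif_pos rfl]
      exact Hyp.strongly_real_Nf_det_one _ rfl (H.sqrtU_sq (by omega) _)
    · simp only [Fu, dif_neg hs]
      refine Hyp.strongly_real_Nf_det_one _ rfl ?_
      have := H.sqrtU_sq (j := (j:ℕ)+1) (by omega) (Elift n (n - j) x)
      linear_combination this

lemma Fu_inj {i i' : Idx O π n}
    (h : IsConj (Fu hπ hodd n i) (Fu hπ hodd n i')) : i = i' := by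
  have H := hyp_holds (n+1) hπ hodd (by omega)
  obtain ⟨hc, hj, he⟩ := H.isConj_Nf_eq (jOf_le n i) (jOf_le n i')
    (Fu_val hπ hodd n i) (Fu_val hπ hodd n i') h
  rcases i with ((s | u) | c) | ⟨j, s, x⟩ <;> rcases i' with ((s' | u') | c') | ⟨j', s', x'⟩ <;>
      simp only [cOf, jOf, eOf] at hc hj he
  · -- scalar scalar
    have hss : s = s' := by
      rcases eq_or_ne s 0 with rfl | hs <;> rcases eq_or_ne s' 0 with rfl | hs'
      · rfl
      · rw [if_pos rfl, if_neg hs'] at hc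
        exact absurd hc H.one_ne_neg_one
      · rw [if_neg hs, if_pos rfl] at hc
        exact absurd hc.symm H.one_ne_neg_one
      · have h1 : s = 1 := by
          have := s.isLt
          have hv : (s : ℕ) ≠ 0 := fun hh => hs (Fin.ext hh)
          exact Fin.ext (by omega)
        have h2 : s' = 1 := by
          have := s'.isLt
          have hv : (s' : ℕ) ≠ 0 := fun hh => hs' (Fin.ext hh)
          exact Fin.ext (by omega)
        rw [h1, h2]
    rw [hss]
  · omega
  · omega
  · exfalso; have := j'.isLt; omega
  · omega
  · rfl
  · exfalso
    refine H.one_ne_neg_one ?_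
    linear_combination -he - c' * hc
  · omega
  · omega
  · exfalso
    refine H.one_ne_neg_one ?_
    linear_combination he + c * hc
  · rw [hc]
  · omega
  · exfalso; have := j.isLt; omega
  · omega
  · omega
  · -- family4 family4
    have hjj : j = j' := Fin.ext (by omega)
    subst hjj
    have hxx : x = x' := Elift_inj hπ (by have := j.isLt; omega) he
    subst hxx
    have hss : s = s' := by
      by_contra hne
      rcases eq_or_ne s 0 with rfl | hs
      · have hs' : s' ≠ 0 := fun hh => hne hh.symm
        rw [if_pos rfl, if_neg hs'] at hc
        refine H.unit_ne_zero (H.sqrtU_isUnit2 (j := (j:ℕ)+1) (by omega) (Elift n (n - j) x)) ?_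
        linear_combination hc
      · rw [if_neg hs] at hc
        rcases eq_or_ne s' 0 with rfl | hs'
        · rw [if_pos rfl] at hc
          refine H.unit_ne_zero (H.sqrtU_isUnit2 (j := (j:ℕ)+1) (by omega) (Elift n (n - j) x)) ?_
          linear_combination -hc
        · exact hne (by fin_cases s <;> fin_cases s' <;> simp_all)
    subst hss
    rfl

lemma Fu_surj (U : (Matrix (Fin 2) (Fin 2) (O ⧸ Ideal.span {π} ^ (n+1)))ˣ)
    (hreal : IsConj U U⁻¹) :
    ∃ i, ConjClasses.mk (Fu hπ hodd n i) = ConjClasses.mk U := by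
  have H := hyp_holds (n+1) hπ hodd (by omega)
  rcases H.real_class_classify U hreal with (h1 | hm1 | hW) | ⟨c, e, j, hjlt, hδ, hcj⟩
  · refine ⟨Sum.inl (Sum.inl (Sum.inl 0)), ?_⟩
    rw [ConjClasses.mk_eq_mk_iff_isConj]
    simp only [Fu, reduceIte]
    exact h1.symm
  · refine ⟨Sum.inl (Sum.inl (Sum.inl 1)), ?_⟩
    rw [ConjClasses.mk_eq_mk_iff_isConj]
    simp only [Fu, one_ne_zero, reduceIte]
    exact hm1.symm
  · refine ⟨Sum.inl (Sum.inl (Sum.inr ())), ?_⟩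
    rw [ConjClasses.mk_eq_mk_iff_isConj]
    exact hW.symm
  · rcases j with _ | m
    · have he : e = 1 - c^2 := by linear_combination hδ
      refine ⟨Sum.inl (Sum.inr c), ?_⟩
      rw [ConjClasses.mk_eq_mk_iff_isConj]
      have hval : Fu hπ hodd n (Sum.inl (Sum.inr c)) = unitNf _ c 0 e hδ := by
        apply Units.ext
        simp only [Fu]
        show Nf _ c 0 (_ ^ (0:ℕ) * (1 - c^2)) = Nf _ c 0 (_ ^ (0:ℕ) * e)
        rw [he]
      rw [hval]
      exact hcj.symm
    · have hmn : m < n := by omega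
      set p := Ideal.Quotient.mk (Ideal.span {π} ^ (n+1)) π with hpdef
      set x : O ⧸ Ideal.span {π} ^ (n - m) :=
        Ideal.Quotient.mk (Ideal.span {π} ^ (n - m)) (sigm (n+1) e) with hxdef
      have hEmul : p ^ (m+1) * Elift n (n - m) x = p ^ (m+1) * e :=
        Elift_mul hπ (by omega) e
      have h2 : p ^ (m+1) * (p ^ (m+1) * Elift n (n - m) x) = p ^ (m+1) * (p ^ (m+1) * e) :=
        congrArg (fun t => p ^ (m+1) * t) hEmul
      have hδE : c ^ 2 + p ^ (m+1) * (p ^ (m+1) * Elift n (n - m) x) = 1 := by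
        rw [h2]; exact hδ
      have hc2 : c ^ 2 = (H.sqrtU (m+1) (Elift n (n - m) x)) ^ 2 := by
        have := H.sqrtU_sq (j := m+1) (by omega) (Elift n (n - m) x)
        linear_combination hδE - this
      rcases H.two_roots hc2 (H.sqrtU_isUnit2 (by omega) _) with hcp | hcm
      · refine ⟨Sum.inr ⟨⟨m, hmn⟩, 0, x⟩, ?_⟩
        rw [ConjClasses.mk_eq_mk_iff_isConj]
        have hval : Fu hπ hodd n (Sum.inr ⟨⟨m, hmn⟩, 0, x⟩) = unitNf p c (m+1) e hδ := by
          apply Units.ext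
          simp only [Fu, reduceDIte]
          show Nf p _ (m+1) (p ^ (m+1) * Elift n (n - m) x) = Nf p c (m+1) (p ^ (m+1) * e)
          rw [hEmul, hcp]
        rw [hval]
        exact hcj.symm
      · refine ⟨Sum.inr ⟨⟨m, hmn⟩, 1, x⟩, ?_⟩
        rw [ConjClasses.mk_eq_mk_iff_isConj]
        have hval : Fu hπ hodd n (Sum.inr ⟨⟨m, hmn⟩, 1, x⟩) = unitNf p c (m+1) e hδ := by
          apply Units.ext
          simp only [Fu, one_ne_zero, reduceDIte]
          show Nf p _ (m+1) (p ^ (m+1) * Elift n (n - m) x) = Nf p c (m+1) (p ^ (m+1) * e)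
          rw [hEmul, hcm]
        rw [hval]
        exact hcj.symm

lemma card_Idx (hπeq : IsLocalRing.maximalIdeal O = Ideal.span {π})
    (q : ℕ) (hq : Nat.card (IsLocalRing.ResidueField O) = q) :
    Nat.card (Idx O π n) = 1 + q ^ (n+1) + 2 * ∑ i ∈ Finset.range (n+1), q ^ i := by
  classical
  have hq0 : 0 < Nat.card (IsLocalRing.ResidueField O) := Nat.card_pos
  have hfin : ∀ m : ℕ, Finite (O ⧸ Ideal.span {π} ^ m) := by
    intro m
    have hc := card_quot_pow hπeq (π := π) m
    exact (Nat.card_pos_iff.mp (by rw [hc]; positivity)).2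
  have hcq : ∀ m : ℕ, Nat.card (O ⧸ Ideal.span {π} ^ m) = q ^ m := by
    intro m; rw [card_quot_pow hπeq, hq]
  haveI := hfin (n+1)
  haveI : ∀ j : Fin n, Finite (O ⧸ Ideal.span {π} ^ (n - (j:ℕ))) := fun j => hfin _
  letI fQ : ∀ j : Fin n, Fintype (O ⧸ Ideal.span {π} ^ (n - (j:ℕ))) :=
    fun j => Fintype.ofFinite _
  have hsig : Nat.card ((j : Fin n) × (Fin 2 × (O ⧸ Ideal.span {π} ^ (n - (j:ℕ)))))
      = ∑ j ∈ Finset.range n, 2 * q ^ (n - j) := by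
    rw [Nat.card_eq_fintype_card, Fintype.card_sigma]
    have hterm : ∀ j : Fin n, Fintype.card (Fin 2 × (O ⧸ Ideal.span {π} ^ (n - (j:ℕ))))
        = 2 * q ^ (n - (j:ℕ)) := by
      intro j
      rw [Fintype.card_prod, Fintype.card_fin, ← Nat.card_eq_fintype_card, hcq]
    rw [Finset.sum_congr rfl (fun j _ => hterm j)]
    exact Fin.sum_univ_eq_sum_range (fun j => 2 * q ^ (n - j)) n
  have h1 : Nat.card (Idx O π n)
      = (Nat.card (Fin 2 ⊕ Unit) + Nat.card (O ⧸ Ideal.span {π} ^ (n+1)))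
        + Nat.card ((j : Fin n) × (Fin 2 × (O ⧸ Ideal.span {π} ^ (n - (j:ℕ))))) := by
    rw [Idx, Nat.card_sum, Nat.card_sum]
  have h2 : Nat.card (Fin 2 ⊕ Unit) = 3 := by
    rw [Nat.card_sum, Nat.card_eq_fintype_card, Fintype.card_fin]
    simp
  rw [h1, h2, hcq, hsig]
  have h3 : ∑ j ∈ Finset.range n, 2 * q ^ (n - j) = ∑ j ∈ Finset.range n, 2 * q ^ (j + 1) := by
    have := Finset.sum_range_reflect (fun j => 2 * q ^ (j + 1)) n
    rw [← this]
    refine Finset.sum_congr rfl ?_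
    intro j hj
    rw [Finset.mem_range] at hj
    congr 2
    omega
  rw [h3, Finset.sum_range_succ' (fun i => q ^ i) n, ← Finset.mul_sum, pow_zero]
  ring

end Defs
end Inst
end GL2RC

open GL2RC in
theorem count_real_strongly_real_classes_GL2
    (O : Type) [CommRing O] [IsDomain O] [IsDiscreteValuationRing O]
    [IsAdicComplete (IsLocalRing.maximalIdeal O) O]
    (π : O) (hπ : IsLocalRing.maximalIdeal O = Ideal.span {π})
    [Finite (IsLocalRing.ResidueField O)]
    (hodd : Odd (ringChar (IsLocalRing.ResidueField O)))
    (q : ℕ) (hq : Nat.card (IsLocalRing.ResidueField O) = q)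
    (ℓ : ℕ) (hℓ : 1 ≤ ℓ) :
    Nat.card {c : ConjClasses (GL (Fin 2) (O ⧸ Ideal.span {π} ^ ℓ)) //
        ∀ a ∈ c.carrier, IsConj a a⁻¹} =
      1 + q ^ ℓ + 2 * ∑ i ∈ Finset.range ℓ, q ^ i ∧
    Nat.card {c : ConjClasses (GL (Fin 2) (O ⧸ Ideal.span {π} ^ ℓ)) //
        ∀ a ∈ c.carrier, ∃ h, h ^ 2 = 1 ∧ h * a * h⁻¹ = a⁻¹} =
      1 + q ^ ℓ + 2 * ∑ i ∈ Finset.range ℓ, q ^ i := by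
  subst hq
  obtain ⟨n, rfl⟩ : ∃ n, ℓ = n + 1 := ⟨ℓ - 1, by omega⟩
  have H := hyp_holds (n+1) hπ hodd (by omega)
  have hiff : ∀ cc : ConjClasses (GL (Fin 2) (O ⧸ Ideal.span {π} ^ (n+1))),
      (∀ a ∈ cc.carrier, IsConj a a⁻¹) ↔
        (∀ a ∈ cc.carrier, ∃ h, h ^ 2 = 1 ∧ h * a * h⁻¹ = a⁻¹) := by
    intro cc
    obtain ⟨U, rfl⟩ := cc.exists_rep
    rw [real_class_iff, strong_class_iff]
    constructor
    · intro hreal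
      rcases H.real_class_classify U hreal with (h1 | hm1 | hW) | ⟨c, e, j, hj, hδ, hcj⟩
      · exact strongly_real_transport h1.symm (Hyp.strongly_real_of_sq_one 1 (mul_one 1))
      · exact strongly_real_transport hm1.symm
          (Hyp.strongly_real_of_sq_one (R := O ⧸ Ideal.span {π} ^ (n+1)) (-1) (by rw [neg_mul_neg, one_mul]))
      · exact strongly_real_transport hW.symm (Hyp.strongly_real_of_sq_one Wu Wu_sq)
      · exact strongly_real_transport hcj.symm (Hyp.strongly_real_Nf_det_one _ rfl hδ)
    · exact fun h => real_of_strong h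
  have hbij : Function.Bijective (fun i : Idx O π n =>
      (⟨ConjClasses.mk (Fu hπ hodd n i),
        (real_class_iff _).mpr (real_of_strong (Fu_strong hπ hodd n i))⟩ :
        {cc : ConjClasses (GL (Fin 2) (O ⧸ Ideal.span {π} ^ (n+1))) //
          ∀ a ∈ cc.carrier, IsConj a a⁻¹})) := by
    constructor
    · intro i i' hii
      exact Fu_inj hπ hodd n
        (ConjClasses.mk_eq_mk_iff_isConj.mp (congrArg Subtype.val hii))
    · rintro ⟨cc, hcc⟩
      obtain ⟨U, rfl⟩ := cc.exists_rep
      obtain ⟨i, hi⟩ := Fu_surj hπ hodd n U ((real_class_iff U).mp hcc)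
      exact ⟨i, Subtype.ext hi⟩
  have hcard1 : Nat.card {cc : ConjClasses (GL (Fin 2) (O ⧸ Ideal.span {π} ^ (n+1))) //
      ∀ a ∈ cc.carrier, IsConj a a⁻¹} = Nat.card (Idx O π n) :=
    (Nat.card_eq_of_bijective _ hbij).symm
  have hcard2 : Nat.card {cc : ConjClasses (GL (Fin 2) (O ⧸ Ideal.span {π} ^ (n+1))) //
      ∀ a ∈ cc.carrier, ∃ h, h ^ 2 = 1 ∧ h * a * h⁻¹ = a⁻¹}
      = Nat.card {cc : ConjClasses (GL (Fin 2) (O ⧸ Ideal.span {π} ^ (n+1))) //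
      ∀ a ∈ cc.carrier, IsConj a a⁻¹} :=
    Nat.card_congr (Equiv.subtypeEquivRight (fun cc => (hiff cc).symm))
  refine ⟨?_, ?_⟩
  · rw [hcard1, card_Idx n hπ _ rfl]
  · rw [hcard2, hcard1, card_Idx n hπ _ rfl]
end

section
/- Let ℓ ≥ 1 and let A ∈ GU₂(𝔬_ℓ). Then A is real in GU₂(𝔬_ℓ) (i.e., A is conjugate in GU₂(𝔬_ℓ) to A⁻¹) if and only if det(A) ∈ {1, −1} and tr(A) = tr(A⁻¹). -/
open Matrix

/-- The antidiagonal permutation matrix `W`. -/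
def Wmat (OO : Type) [CommRing OO] : Matrix (Fin 2) (Fin 2) OO := !![0, 1; 1, 0]

lemma Wmat_det_isUnit (OO : Type) [CommRing OO] : IsUnit (Wmat OO).det := by
  have : (Wmat OO).det = -1 := by simp [Wmat, Matrix.det_fin_two_of]
  rw [this]; exact isUnit_one.neg

/-- `A* = W (A°)ᵀ W⁻¹`, where `°` is applied entrywise. -/
noncomputable def mstar {OO : Type} [CommRing OO] (c : OO →+* OO)
    (M : Matrix (Fin 2) (Fin 2) OO) : Matrix (Fin 2) (Fin 2) OO :=
  Wmat OO * (M.map c)ᵀ * (Wmat OO)⁻¹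

lemma mstar_mul {OO : Type} [CommRing OO] (c : OO →+* OO)
    (M N : Matrix (Fin 2) (Fin 2) OO) :
    mstar c (M * N) = mstar c N * mstar c M := by
  unfold mstar
  rw [Matrix.map_mul, Matrix.transpose_mul]
  simp only [mul_assoc]
  rw [Matrix.nonsing_inv_mul_cancel_left _ _ (Wmat_det_isUnit OO)]

lemma mstar_one {OO : Type} [CommRing OO] (c : OO →+* OO) :
    mstar c (1 : Matrix (Fin 2) (Fin 2) OO) = 1 := by
  unfold mstar
  rw [Matrix.map_one c c.map_zero c.map_one, Matrix.transpose_one, mul_one,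
    Matrix.mul_nonsing_inv _ (Wmat_det_isUnit OO)]

lemma gu_one {OO : Type} [CommRing OO] (c : OO →+* OO) :
    mstar c ((1 : GL (Fin 2) OO) : Matrix (Fin 2) (Fin 2) OO) *
      ((1 : GL (Fin 2) OO) : Matrix (Fin 2) (Fin 2) OO) = 1 := by
  rw [Units.val_one, mstar_one, one_mul]

lemma gu_mul {OO : Type} [CommRing OO] (c : OO →+* OO) (a b : GL (Fin 2) OO)
    (ha : mstar c ↑a * (↑a : Matrix (Fin 2) (Fin 2) OO) = 1)
    (hb : mstar c ↑b * (↑b : Matrix (Fin 2) (Fin 2) OO) = 1) :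
    mstar c (↑(a * b)) * (↑(a * b) : Matrix (Fin 2) (Fin 2) OO) = 1 := by
  rw [Units.val_mul]
  rw [mstar_mul]
  rw [mul_assoc]
  rw [← mul_assoc (mstar c (↑a : Matrix (Fin 2) (Fin 2) OO))
    (↑a : Matrix (Fin 2) (Fin 2) OO) (↑b : Matrix (Fin 2) (Fin 2) OO)]
  rw [ha, one_mul]
  exact hb

lemma gu_inv {OO : Type} [CommRing OO] (c : OO →+* OO) (a : GL (Fin 2) OO)
    (ha : mstar c ↑a * (↑a : Matrix (Fin 2) (Fin 2) OO) = 1) :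
    mstar c (↑a⁻¹) * (↑a⁻¹ : Matrix (Fin 2) (Fin 2) OO) = 1 := by
  have h1 : mstar c (↑a : Matrix (Fin 2) (Fin 2) OO) = ↑a⁻¹ := by
    calc mstar c (↑a : Matrix (Fin 2) (Fin 2) OO)
        = mstar c (↑a : Matrix (Fin 2) (Fin 2) OO) *
            ((↑a : Matrix (Fin 2) (Fin 2) OO) * (↑a⁻¹ : Matrix (Fin 2) (Fin 2) OO)) := by
          rw [a.mul_inv, mul_one]
      _ = mstar c (↑a : Matrix (Fin 2) (Fin 2) OO) * (↑a : Matrix (Fin 2) (Fin 2) OO) *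
            (↑a⁻¹ : Matrix (Fin 2) (Fin 2) OO) := by rw [mul_assoc]
      _ = ↑a⁻¹ := by rw [ha, one_mul]
  calc mstar c (↑a⁻¹ : Matrix (Fin 2) (Fin 2) OO) * (↑a⁻¹ : Matrix (Fin 2) (Fin 2) OO)
      = mstar c (↑a⁻¹ : Matrix (Fin 2) (Fin 2) OO) *
          mstar c (↑a : Matrix (Fin 2) (Fin 2) OO) := by rw [h1]
    _ = mstar c ((↑a : Matrix (Fin 2) (Fin 2) OO) * (↑a⁻¹ : Matrix (Fin 2) (Fin 2) OO)) :=
        (mstar_mul c _ _).symm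
    _ = 1 := by rw [a.mul_inv, mstar_one]

/-- The unitary group `GU₂(𝔬_ℓ)` as a subgroup of `GL₂(𝔒_ℓ)`, with respect to the
entrywise involution `c`. -/
noncomputable def GU2 (OO : Type) [CommRing OO] (c : OO →+* OO) :
    Subgroup (GL (Fin 2) OO) where
  carrier := {A | mstar c (A : Matrix (Fin 2) (Fin 2) OO) * (A : Matrix (Fin 2) (Fin 2) OO) = 1}
  one_mem' := gu_one c
  mul_mem' := fun ha hb => gu_mul c _ _ ha hb
  inv_mem' := fun ha => gu_inv c _ ha


section AuxReal

lemma nonunit_sum' {R : Type} [CommRing R] [IsLocalRing R] {a b : R}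
    (ha : ¬ IsUnit a) (hb : ¬ IsUnit b) : ¬ IsUnit (a + b) :=
  IsLocalRing.nonunits_add ha hb

lemma unit_add_nonunit' {R : Type} [CommRing R] [IsLocalRing R] {a b : R}
    (ha : IsUnit a) (hb : ¬ IsUnit b) : IsUnit (a + b) := by
  by_contra h
  have : ¬ IsUnit ((a + b) + (-b)) := nonunit_sum' h ((IsUnit.neg_iff b).not.mpr hb)
  simp only [add_neg_cancel_right] at this
  exact this ha

lemma sq_lift' {R : Type} [CommRing R] [IsLocalRing R] (p : R) (ℓ : ℕ)
    (hnil : p ^ ℓ = 0) (h2 : IsUnit (2 : R))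
    (w s : R) (hs : IsUnit s) (hws : ∃ c, w - s ^ 2 = p * c) :
    ∃ x, x ^ 2 = w := by
  by_cases hsr : Subsingleton R
  · exact ⟨0, Subsingleton.elim _ _⟩
  have hpn : ¬ IsUnit p := by
    intro hp
    have : IsUnit (p ^ ℓ) := hp.pow ℓ
    rw [hnil, isUnit_zero_iff] at this
    exact hsr (subsingleton_of_zero_eq_one this)
  have claim : ∀ m : ℕ, ∃ x, IsUnit x ∧ ∃ c, w - x ^ 2 = p ^ (m + 1) * c := by
    intro m
    induction m with
    | zero => exact ⟨s, hs, by simpa using hws⟩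
    | succ m ih =>
      obtain ⟨x, hx, c, hc⟩ := ih
      have h2x : IsUnit (2 * x) := h2.mul hx
      set t : R := ↑h2x.unit⁻¹ * c with ht
      refine ⟨x + p ^ (m + 1) * t, ?_, -(p ^ m * t ^ 2), ?_⟩
      · by_contra hxu
        have : ¬ IsUnit (p ^ (m + 1) * t) := fun h =>
          hpn (isUnit_of_mul_isUnit_left (by
            have : IsUnit (p * (p ^ m * t)) := by
              rwa [show p * (p ^ m * t) = p ^ (m + 1) * t by ring]
            exact this))
        have := nonunit_sum' hxu ((IsUnit.neg_iff _).not.mpr this)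
        simp only [add_neg_cancel_right] at this
        exact this hx
      · have h2xt : 2 * x * t = c := by
          rw [ht, ← mul_assoc, IsUnit.mul_val_inv, one_mul]
        have : w - (x + p ^ (m + 1) * t) ^ 2
            = (w - x ^ 2) - p ^ (m + 1) * (2 * x * t) - p ^ (m + 1) * p ^ (m + 1) * t ^ 2 := by
          ring
        rw [this, hc, h2xt, sub_self, zero_sub]
        ring
  obtain ⟨x, _, c, hc⟩ := claim ℓ
  refine ⟨x, ?_⟩
  have : p ^ (ℓ + 1) = 0 := by rw [pow_succ, hnil, zero_mul]
  rw [this, zero_mul] at hc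
  exact (sub_eq_zero.mp hc).symm

lemma base_solve' {R : Type} [CommRing R] [IsLocalRing R] {u : R} (hu : IsUnit u)
    (e b c : R) (h : IsUnit e ∨ IsUnit b ∨ IsUnit c) :
    ∃ x y z : R, IsUnit (x ^ 2 + u * (y * z)) ∧ e * x + u * (b * z + c * y) = 0 := by
  rcases h with he | hb | hc
  · by_cases hb : IsUnit b
    · refine ⟨-(u * b), 0, e, ?_, by ring⟩
      have : (-(u * b)) ^ 2 + u * (0 * e) = (u * b) ^ 2 := by ring
      rw [this]; exact (hu.mul hb).pow 2
    by_cases hc : IsUnit c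
    · refine ⟨-(u * c), e, 0, ?_, by ring⟩
      have : (-(u * c)) ^ 2 + u * (e * 0) = (u * c) ^ 2 := by ring
      rw [this]; exact (hu.mul hc).pow 2
    · set t : R := ↑he.unit⁻¹ * (u * (b + c)) with ht
      have hinv : ↑he.unit⁻¹ * e = 1 := IsUnit.val_inv_mul he
      refine ⟨-t, 1, 1, ?_, ?_⟩
      · have htn : ¬ IsUnit t := by
          intro h
          have hbc : IsUnit (b + c) := by
            rw [ht] at h
            exact isUnit_of_mul_isUnit_right
              (by rwa [show ↑he.unit⁻¹ * (u * (b + c)) = (↑he.unit⁻¹ * u) * (b + c) by ring] at h)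
          exact (by_contra fun _ => (nonunit_sum' hb hc) hbc : False)
        have : (-t) ^ 2 + u * (1 * 1) = t * t + u := by ring
        rw [this]
        by_contra hV
        have : ¬ IsUnit ((t * t + u) + (-(t * t))) :=
          nonunit_sum' hV ((IsUnit.neg_iff _).not.mpr (fun h => htn (isUnit_of_mul_isUnit_left h)))
        rw [show t * t + u + -(t * t) = u by ring] at this
        exact this hu
      · have : e * (-t) + u * (b * 1 + c * 1) = (1 - ↑he.unit⁻¹ * e) * (u * (b + c)) := by
          rw [ht]; ring
        rw [this, hinv, sub_self, zero_mul]
  · refine ⟨-(u * b), 0, e, ?_, by ring⟩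
    have : (-(u * b)) ^ 2 + u * (0 * e) = (u * b) ^ 2 := by ring
    rw [this]; exact (hu.mul hb).pow 2
  · refine ⟨-(u * c), e, 0, ?_, by ring⟩
    have : (-(u * c)) ^ 2 + u * (e * 0) = (u * c) ^ 2 := by ring
    rw [this]; exact (hu.mul hc).pow 2

lemma master_solve' {R : Type} [CommRing R] [IsLocalRing R] (p u : R) (ℓ : ℕ)
    (hnil : p ^ ℓ = 0) (hdiv : ∀ r : R, ¬ IsUnit r → ∃ c, r = p * c)
    (hu : IsUnit u) (e b c : R) :
    ∃ x y z : R, IsUnit (x ^ 2 + u * (y * z)) ∧ e * x + u * (b * z + c * y) = 0 := by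
  have main : ∀ d : ℕ, ∀ e b c : R, p ^ (ℓ - d) ∣ e → p ^ (ℓ - d) ∣ b → p ^ (ℓ - d) ∣ c →
      ∃ x y z : R, IsUnit (x ^ 2 + u * (y * z)) ∧ e * x + u * (b * z + c * y) = 0 := by
    intro d
    induction d with
    | zero =>
      intro e b c he hb hc
      rw [Nat.sub_zero, hnil, zero_dvd_iff] at he hb hc
      subst he; subst hb; subst hc
      refine ⟨0, 1, 1, ?_, by ring⟩
      have : (0:R) ^ 2 + u * (1 * 1) = u := by ring
      rw [this]; exact hu
    | succ d ih =>
      intro e b c he hb hc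
      obtain ⟨e1, rfl⟩ := he
      obtain ⟨b1, rfl⟩ := hb
      obtain ⟨c1, rfl⟩ := hc
      set k := ℓ - (d + 1) with hk
      by_cases hun : IsUnit e1 ∨ IsUnit b1 ∨ IsUnit c1
      · obtain ⟨x, y, z, hV, heq⟩ := base_solve' hu e1 b1 c1 hun
        refine ⟨x, y, z, hV, ?_⟩
        have : p ^ k * e1 * x + u * (p ^ k * b1 * z + p ^ k * c1 * y)
            = p ^ k * (e1 * x + u * (b1 * z + c1 * y)) := by ring
        rw [this, heq, mul_zero]
      · push_neg at hun
        obtain ⟨hne, hnb, hnc⟩ := hun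
        obtain ⟨e2, he2⟩ := hdiv e1 hne
        obtain ⟨b2, hb2⟩ := hdiv b1 hnb
        obtain ⟨c2, hc2⟩ := hdiv c1 hnc
        have hle : ℓ - d ≤ k + 1 := by omega
        have hdvd : ∀ r2 : R, p ^ (ℓ - d) ∣ p ^ k * (p * r2) := by
          intro r2
          have : p ^ (ℓ - d) ∣ p ^ (k + 1) := pow_dvd_pow p hle
          exact this.trans ⟨r2, by ring⟩
        refine ih (p ^ k * e1) (p ^ k * b1) (p ^ k * c1) ?_ ?_ ?_
        · rw [he2]; exact hdvd e2
        · rw [hb2]; exact hdvd b2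
        · rw [hc2]; exact hdvd c2
  have := main ℓ e b c
  rw [Nat.sub_self, pow_zero] at this
  exact this (one_dvd e) (one_dvd b) (one_dvd c)

lemma norm_surj' {R k : Type} [CommRing R] [IsLocalRing R] [Field k] [Finite k]
    (ρ : R →+* k) (hρs : Function.Surjective ρ)
    (hunit : ∀ r : R, IsUnit r ↔ ρ r ≠ 0)
    (hOddCard : Odd (Nat.card k))
    (p : R) (ℓ : ℕ) (hnil : p ^ ℓ = 0) (h2 : IsUnit (2 : R))
    (hker : ∀ r : R, ρ r = 0 → ∃ c, r = p * c)
    (u : R) (hu : IsUnit u) (v : R) (hv : IsUnit v) :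
    ∃ a b : R, a ^ 2 - u * b ^ 2 = v := by
  have : Fintype k := Fintype.ofFinite k
  have hcard : Fintype.card k % 2 = 1 := by
    have := hOddCard
    rw [Nat.card_eq_fintype_card] at this
    exact Nat.odd_iff.mp this
  have huk : ρ u ≠ 0 := (hunit u).mp hu
  have hvk : ρ v ≠ 0 := (hunit v).mp hv
  have hf : (Polynomial.X ^ 2 + Polynomial.C (-(ρ v)) : Polynomial k).degree = 2 :=
    Polynomial.degree_X_pow_add_C (by norm_num) _
  have hg : (Polynomial.C (-(ρ u)) * Polynomial.X ^ 2 : Polynomial k).degree = 2 :=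
    Polynomial.degree_C_mul_X_pow 2 (neg_ne_zero.mpr huk)
  obtain ⟨a₀, b₀, hab⟩ := FiniteField.exists_root_sum_quadratic hf hg hcard
  simp only [Polynomial.eval_add, Polynomial.eval_pow, Polynomial.eval_X,
    Polynomial.eval_C, Polynomial.eval_mul, Polynomial.eval_neg] at hab
  by_cases ha0 : a₀ = 0
  · rw [ha0] at hab
    have hv2 : ρ v = -(ρ u * b₀ ^ 2) := by linear_combination -hab
    have hb0 : b₀ ≠ 0 := by
      intro hb0
      rw [hb0] at hv2
      apply hvk
      rw [hv2]; ring
    obtain ⟨s, hsl⟩ := hρs b₀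
    have hsu : IsUnit s := (hunit s).mpr (by rw [hsl]; exact hb0)
    set w : R := -(↑hu.unit⁻¹ * v) with hw
    have hinv : ↑hu.unit⁻¹ * u = 1 := IsUnit.val_inv_mul hu
    have h1 : ρ (↑hu.unit⁻¹ : R) * ρ u = 1 := by rw [← _root_.map_mul, hinv, _root_.map_one]
    obtain ⟨x, hx⟩ := sq_lift' p ℓ hnil h2 w s hsu (by
      apply hker
      rw [_root_.map_sub, _root_.map_pow, hsl, hw, _root_.map_neg, _root_.map_mul, hv2]
      linear_combination b₀ ^ 2 * h1)
    refine ⟨0, x, ?_⟩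
    rw [hx, hw]
    have hinv2 : u * ↑hu.unit⁻¹ = 1 := by rw [mul_comm]; exact hinv
    linear_combination v * hinv2
  · obtain ⟨q, hql⟩ := hρs b₀
    obtain ⟨s, hsl⟩ := hρs a₀
    have hsu : IsUnit s := (hunit s).mpr (by rw [hsl]; exact ha0)
    set w : R := v + u * q ^ 2 with hw
    obtain ⟨x, hx⟩ := sq_lift' p ℓ hnil h2 w s hsu (by
      apply hker
      rw [_root_.map_sub, _root_.map_pow, hsl, hw, _root_.map_add, _root_.map_mul, _root_.map_pow, hql]
      linear_combination -hab)
    exact ⟨x, q, by rw [hx, hw]; ring⟩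

lemma Wmat_inv' (OO : Type) [CommRing OO] : (Wmat OO)⁻¹ = Wmat OO := by
  have h : Wmat OO * Wmat OO = 1 := by
    rw [Wmat, Matrix.mul_fin_two, Matrix.one_fin_two]
    norm_num
  exact Matrix.inv_eq_right_inv h

lemma mstar_fin_two {OO : Type} [CommRing OO] (c : OO →+* OO) (p q r s : OO) :
    mstar c !![p, q; r, s] = !![c s, c q; c r, c p] := by
  rw [mstar, Wmat_inv', Wmat]
  ext i j
  fin_cases i <;> fin_cases j <;>
    simp [Matrix.mul_apply, Fin.sum_univ_two, Matrix.map_apply, Matrix.vecMul,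
      dotProduct, Matrix.transpose_apply]

lemma fin_two_mat_eq {OO : Type} [CommRing OO] {a b c d a' b' c' d' : OO}
    (h1 : a = a') (h2 : b = b') (h3 : c = c') (h4 : d = d') :
    !![a, b; c, d] = !![a', b'; c', d'] := by rw [h1, h2, h3, h4]

lemma neg_fin_two_mat {OO : Type} [CommRing OO] (a b c d : OO) :
    -(!![a, b; c, d]) = !![-a, -b; -c, -d] := by
  ext i j
  fin_cases i <;> fin_cases j <;> simp

lemma fin_two_entries {OO : Type} [CommRing OO] {a b c d a' b' c' d' : OO}
    (h : !![a, b; c, d] = !![a', b'; c', d']) :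
    a = a' ∧ b = b' ∧ c = c' ∧ d = d' := by
  refine ⟨?_, ?_, ?_, ?_⟩
  · have := congrFun (congrFun h 0) 0; simpa using this
  · have := congrFun (congrFun h 0) 1; simpa using this
  · have := congrFun (congrFun h 1) 0; simpa using this
  · have := congrFun (congrFun h 1) 1; simpa using this

end AuxReal

theorem real_iff_det_trace_GU2
    (O : Type) [CommRing O] [IsDomain O] [IsDiscreteValuationRing O]
    [IsAdicComplete (IsLocalRing.maximalIdeal O) O]
    (π : O) (hπ : IsLocalRing.maximalIdeal O = Ideal.span {π})
    [Finite (IsLocalRing.ResidueField O)]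
    (hodd : Odd (ringChar (IsLocalRing.ResidueField O)))
    (ℓ : ℕ) (hℓ : 1 ≤ ℓ)
    -- the unramified quadratic extension 𝔒_ℓ = 𝔬_ℓ[ε]
    (OO : Type) [CommRing OO] [Algebra (O ⧸ Ideal.span {π} ^ ℓ) OO]
    (ε : OO) (u : O) (hu : IsUnit u)
    (hnonsq : ¬ ∃ t : IsLocalRing.ResidueField O, t ^ 2 = IsLocalRing.residue O u)
    (hε2 : ε ^ 2 = algebraMap (O ⧸ Ideal.span {π} ^ ℓ) OO
      (Ideal.Quotient.mk (Ideal.span {π} ^ ℓ) u))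
    (hbasis : ∀ z : OO, ∃! xy : (O ⧸ Ideal.span {π} ^ ℓ) × (O ⧸ Ideal.span {π} ^ ℓ),
      z = algebraMap (O ⧸ Ideal.span {π} ^ ℓ) OO xy.1 +
        algebraMap (O ⧸ Ideal.span {π} ^ ℓ) OO xy.2 * ε)
    -- the Galois involution `x ↦ x°`
    (cj : OO ≃ₐ[O ⧸ Ideal.span {π} ^ ℓ] OO) (hcj : cj ε = -ε)
    (A : ↥(GU2 OO (cj : OO →+* OO))) :
    IsConj A A⁻¹ ↔
      ((((A : GL (Fin 2) OO) : Matrix (Fin 2) (Fin 2) OO).det = 1 ∨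
        ((A : GL (Fin 2) OO) : Matrix (Fin 2) (Fin 2) OO).det = -1) ∧
       Matrix.trace ((A : GL (Fin 2) OO) : Matrix (Fin 2) (Fin 2) OO) =
         Matrix.trace (((A⁻¹ : ↥(GU2 OO (cj : OO →+* OO))) : GL (Fin 2) OO) :
           Matrix (Fin 2) (Fin 2) OO)) := by
  classical
  -- ## plumbing for R = O / (π)^ℓ
  have hl0 : ℓ ≠ 0 := by omega
  have hle : Ideal.span {π} ^ ℓ ≤ IsLocalRing.maximalIdeal O := by
    rw [hπ]; exact Ideal.pow_le_self hl0
  set ρ : (O ⧸ Ideal.span {π} ^ ℓ) →+* IsLocalRing.ResidueField O :=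
    Ideal.Quotient.lift _ (IsLocalRing.residue O)
      (fun a ha => Ideal.Quotient.eq_zero_iff_mem.mpr (hle ha)) with hρdef
  have hρmk : ∀ a : O, ρ (Ideal.Quotient.mk _ a) = IsLocalRing.residue O a := fun a => rfl
  have hρs : Function.Surjective ρ := by
    intro x
    obtain ⟨a, ha⟩ := IsLocalRing.residue_surjective (R := O) x
    exact ⟨Ideal.Quotient.mk _ a, by rw [hρmk, ha]⟩
  haveI : Nontrivial (O ⧸ Ideal.span {π} ^ ℓ) := by
    refine nontrivial_of_ne 1 0 (fun h => ?_)
    have h1 : (1 : IsLocalRing.ResidueField O) = 0 := by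
      rw [← _root_.map_one ρ, h, _root_.map_zero]
    exact one_ne_zero h1
  haveI hloc : IsLocalRing (O ⧸ Ideal.span {π} ^ ℓ) :=
    IsLocalRing.of_surjective' (Ideal.Quotient.mk _) Ideal.Quotient.mk_surjective
  have hunit : ∀ r : O ⧸ Ideal.span {π} ^ ℓ, IsUnit r ↔ ρ r ≠ 0 := by
    intro r; constructor
    · intro hr; exact (hr.map ρ).ne_zero
    · intro hr
      obtain ⟨a, rfl⟩ := Ideal.Quotient.mk_surjective r
      rw [hρmk] at hr
      have ha : ¬ a ∈ IsLocalRing.maximalIdeal O := fun hmem =>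
        hr (Ideal.Quotient.eq_zero_iff_mem.mpr hmem)
      have hau : IsUnit a := by
        by_contra h
        exact ha ((IsLocalRing.mem_maximalIdeal a).mpr (mem_nonunits_iff.mpr h))
      exact hau.map _
  set p : O ⧸ Ideal.span {π} ^ ℓ := Ideal.Quotient.mk _ π with hpdef
  have hker : ∀ r, ρ r = 0 → ∃ c, r = p * c := by
    intro r hr
    obtain ⟨a, rfl⟩ := Ideal.Quotient.mk_surjective r
    rw [hρmk] at hr
    have hmem : a ∈ Ideal.span {π} := by
      rw [← hπ]; exact Ideal.Quotient.eq_zero_iff_mem.mp hr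
    obtain ⟨c, hc⟩ := Ideal.mem_span_singleton'.mp hmem
    refine ⟨Ideal.Quotient.mk _ c, ?_⟩
    rw [hpdef, ← _root_.map_mul, mul_comm π c, hc]
  have hdiv : ∀ r, ¬ IsUnit r → ∃ c, r = p * c := fun r hr =>
    hker r (by by_contra h; exact hr ((hunit r).mpr h))
  have hnil : p ^ ℓ = 0 := by
    rw [hpdef, ← map_pow, Ideal.Quotient.eq_zero_iff_mem]
    exact Ideal.pow_mem_pow (Ideal.mem_span_singleton_self π) ℓ
  have hchar2 : (2 : IsLocalRing.ResidueField O) ≠ 0 := by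
    intro h
    have h2 : ((2 : ℕ) : IsLocalRing.ResidueField O) = 0 := by push_cast; exact h
    haveI : CharP (IsLocalRing.ResidueField O) (ringChar (IsLocalRing.ResidueField O)) :=
      ringChar.charP _
    have hdvd := (CharP.cast_eq_zero_iff (IsLocalRing.ResidueField O)
      (ringChar (IsLocalRing.ResidueField O)) 2).mp h2
    have hne1 := CharP.char_ne_one (IsLocalRing.ResidueField O)
      (ringChar (IsLocalRing.ResidueField O))
    have hle2 := Nat.le_of_dvd (by norm_num) hdvd
    have hoddc := Nat.odd_iff.mp hodd
    omega
  have h2R : IsUnit (2 : O ⧸ Ideal.span {π} ^ ℓ) := by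
    refine (hunit 2).mpr ?_
    rw [map_ofNat]
    exact hchar2
  have hOddCard : Odd (Nat.card (IsLocalRing.ResidueField O)) := by
    haveI : Fintype (IsLocalRing.ResidueField O) := Fintype.ofFinite _
    haveI : CharP (IsLocalRing.ResidueField O) (ringChar (IsLocalRing.ResidueField O)) :=
      ringChar.charP _
    obtain ⟨n, hprime, hcard⟩ := FiniteField.card (IsLocalRing.ResidueField O)
      (ringChar (IsLocalRing.ResidueField O))
    rw [Nat.card_eq_fintype_card, hcard]
    exact hodd.pow
  -- ## plumbing for OO
  set alg := algebraMap (O ⧸ Ideal.span {π} ^ ℓ) OO with halgdef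
  set u' : O ⧸ Ideal.span {π} ^ ℓ := Ideal.Quotient.mk _ u with hu'def
  have hu' : IsUnit u' := hu.map _
  have uniq : ∀ x1 y1 x2 y2 : O ⧸ Ideal.span {π} ^ ℓ,
      alg x1 + alg y1 * ε = alg x2 + alg y2 * ε → x1 = x2 ∧ y1 = y2 := by
    intro x1 y1 x2 y2 h
    obtain ⟨xy, hxy, hun⟩ := hbasis (alg x1 + alg y1 * ε)
    have h1 := hun (x1, y1) rfl
    have h2 := hun (x2, y2) h
    have h3 := h1.trans h2.symm
    exact ⟨(Prod.ext_iff.mp h3).1, (Prod.ext_iff.mp h3).2⟩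
  have hcoords : ∀ zz : OO, ∃ xy : (O ⧸ Ideal.span {π} ^ ℓ) × (O ⧸ Ideal.span {π} ^ ℓ),
      zz = alg xy.1 + alg xy.2 * ε := fun zz => (hbasis zz).exists
  have h2cancel : ∀ y : O ⧸ Ideal.span {π} ^ ℓ, y = -y → y = 0 := by
    intro y h
    have h2y : (2 : O ⧸ Ideal.span {π} ^ ℓ) * y = 0 := by linear_combination h
    exact (IsUnit.mul_right_eq_zero h2R).mp h2y
  have hfix : ∀ zz : OO, cj zz = zz → ∃ r, zz = alg r := by
    intro zz h
    obtain ⟨⟨x, y⟩, hz⟩ := hcoords zz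
    have hcz : cj zz = alg x + alg (-y) * ε := by
      rw [hz, _root_.map_add, _root_.map_mul, AlgEquiv.commutes, AlgEquiv.commutes, hcj,
        _root_.map_neg]
      ring
    have huq := uniq x y x (-y) (hz.symm.trans (h.symm.trans hcz))
    have hy0 : y = 0 := h2cancel y huq.2
    exact ⟨x, by rw [hz, hy0, _root_.map_zero, zero_mul, add_zero]⟩
  have hanti : ∀ zz : OO, cj zz = -zz → ∃ r, zz = alg r * ε := by
    intro zz h
    obtain ⟨⟨x, y⟩, hz⟩ := hcoords zz
    have hcz : cj zz = alg x + alg (-y) * ε := by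
      rw [hz, _root_.map_add, _root_.map_mul, AlgEquiv.commutes, AlgEquiv.commutes, hcj,
        _root_.map_neg]
      ring
    have hneg : -zz = alg (-x) + alg (-y) * ε := by
      rw [hz, _root_.map_neg, _root_.map_neg]; ring
    have huq := uniq x (-y) (-x) (-y) (hcz.symm.trans (h.trans hneg))
    have hx0 : x = 0 := h2cancel x huq.1
    exact ⟨y, by rw [hz, hx0, _root_.map_zero, zero_add]⟩
  have h2OO : IsUnit (2 : OO) := by
    rw [show (2 : OO) = alg (2 : O ⧸ Ideal.span {π} ^ ℓ) from (map_ofNat alg 2).symm]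
    exact h2R.map alg
  -- ## matrix-level plumbing
  set Agl : GL (Fin 2) OO := (A : GL (Fin 2) OO) with hAgldef
  set Mm : Matrix (Fin 2) (Fin 2) OO := (Agl : Matrix (Fin 2) (Fin 2) OO) with hMmdef
  set Mi : Matrix (Fin 2) (Fin 2) OO := ((Agl⁻¹ : GL (Fin 2) OO) : Matrix (Fin 2) (Fin 2) OO)
    with hMidef
  rw [show (((A⁻¹ : ↥(GU2 OO (cj : OO →+* OO))) : GL (Fin 2) OO) :
      Matrix (Fin 2) (Fin 2) OO) = Mi from rfl]
  have hMmMi : Mm * Mi = 1 := by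
    rw [hMmdef, hMidef, ← Units.val_mul, mul_inv_cancel, Units.val_one]
  have hsA : mstar (cj : OO →+* OO) Mm * Mm = 1 := A.2
  have hmsMi : mstar (cj : OO →+* OO) Mm = Mi := by
    calc mstar (cj : OO →+* OO) Mm = mstar (cj : OO →+* OO) Mm * (Mm * Mi) := by
          rw [hMmMi, mul_one]
    _ = (mstar (cj : OO →+* OO) Mm * Mm) * Mi := by rw [mul_assoc]
    _ = Mi := by rw [hsA, one_mul]
  constructor
  · -- forward direction
    intro hconj
    obtain ⟨g, hg⟩ := isConj_iff.mp hconj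
    have hGL : (↑g : GL (Fin 2) OO) * Agl * (↑g : GL (Fin 2) OO)⁻¹ = Agl⁻¹ := by
      have := congrArg (fun z : ↥(GU2 OO (cj : OO →+* OO)) => (z : GL (Fin 2) OO)) hg
      simpa using this
    have hMiconj : Mi = ((↑g : GL (Fin 2) OO) : Matrix (Fin 2) (Fin 2) OO) * Mm *
        (((↑g : GL (Fin 2) OO)⁻¹ : GL (Fin 2) OO) : Matrix (Fin 2) (Fin 2) OO) := by
      rw [hMidef, ← hGL, Units.val_mul, Units.val_mul]
    have htreq : Mm.trace = Mi.trace := by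
      rw [hMiconj]; exact (Matrix.trace_units_conj _ Mm).symm
    have hdeteq : Mi.det = Mm.det := by
      rw [hMiconj]; exact Matrix.det_units_conj _ Mm
    have hd2 : Mm.det * Mm.det = 1 := by
      have := congrArg Matrix.det hMmMi
      rw [Matrix.det_mul, Matrix.det_one, hdeteq] at this
      exact this
    obtain ⟨⟨dp, dq⟩, hdco⟩ := hcoords Mm.det
    have hdd : (alg dp + alg dq * ε) * (alg dp + alg dq * ε) = 1 := by rw [← hdco]; exact hd2
    have he1 : alg (dp ^ 2 + u' * dq ^ 2) + alg (2 * (dp * dq)) * ε = alg 1 + alg 0 * ε := by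
      simp only [_root_.map_add, _root_.map_mul, map_pow, _root_.map_one, _root_.map_zero,
        map_ofNat]
      linear_combination hdd - (alg dq) ^ 2 * hε2
    obtain ⟨hp2, hpq0⟩ := uniq _ _ _ _ he1
    refine ⟨?_, htreq⟩
    by_cases hdpu : IsUnit dp
    · have hdq0 : dq = 0 := by
        have h2p : IsUnit (2 * dp) := h2R.mul hdpu
        have hz : (2 * dp) * dq = 0 := by linear_combination hpq0
        exact (IsUnit.mul_right_eq_zero h2p).mp hz
      have hdp2 : (dp - 1) * (dp + 1) = 0 := by
        rw [hdq0] at hp2; linear_combination hp2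
      have hdet : Mm.det = alg dp := by
        rw [hdco, hdq0, _root_.map_zero, zero_mul, add_zero]
      by_cases h1u : IsUnit (dp - 1)
      · right
        have hsum : dp + 1 = 0 := (IsUnit.mul_right_eq_zero h1u).mp hdp2
        have hdpm : dp = -1 := by linear_combination hsum
        rw [hdet, hdpm, _root_.map_neg, _root_.map_one]
      · left
        have hplus : IsUnit (dp + 1) := by
          have := unit_add_nonunit' h2R h1u
          rwa [show (2 : O ⧸ Ideal.span {π} ^ ℓ) + (dp - 1) = dp + 1 by ring] at this
        have hsub : dp - 1 = 0 :=
          (IsUnit.mul_right_eq_zero hplus).mp (by linear_combination hdp2)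
        have hdp1 : dp = 1 := by linear_combination hsub
        rw [hdet, hdp1, _root_.map_one]
    · exfalso
      have hdp2n : ¬ IsUnit (dp ^ 2) := fun h =>
        hdpu (isUnit_of_mul_isUnit_left (by rwa [pow_two] at h))
      have huq : IsUnit (u' * dq ^ 2) := by
        have hexp : u' * dq ^ 2 = 1 + (-(dp ^ 2)) := by linear_combination hp2
        rw [hexp]
        exact unit_add_nonunit' isUnit_one ((IsUnit.neg_iff _).not.mpr hdp2n)
      have hqu : IsUnit dq := by
        have h1 : IsUnit (dq ^ 2) := isUnit_of_mul_isUnit_right huq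
        exact isUnit_of_mul_isUnit_left (by rwa [pow_two] at h1)
      have hdp0 : dp = 0 := by
        have h2q : IsUnit (2 * dq) := h2R.mul hqu
        have hz : (2 * dq) * dp = 0 := by linear_combination hpq0
        exact (IsUnit.mul_right_eq_zero h2q).mp hz
      have hval : u' * dq ^ 2 = 1 := by rw [hdp0] at hp2; linear_combination hp2
      have hk : ρ u' * (ρ dq) ^ 2 = 1 := by
        rw [← map_pow, ← _root_.map_mul, hval, _root_.map_one]
      have hq0 : ρ dq ≠ 0 := (hunit dq).mp hqu
      refine hnonsq ⟨(ρ dq)⁻¹, ?_⟩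
      have hρu : ρ u' = IsLocalRing.residue O u := hρmk u
      rw [← hρu]
      field_simp
      linear_combination -hk
  · -- backward direction
    rintro ⟨hdet, htr⟩
    rcases hdet with hd1 | hdm1
    · -- det = 1
      have hadj : Mi = Mm.adjugate := by
        have h1 : Mm.adjugate * Mm = 1 := by rw [Matrix.adjugate_mul, hd1, one_smul]
        calc Mi = 1 * Mi := (one_mul Mi).symm
        _ = (Mm.adjugate * Mm) * Mi := by rw [h1]
        _ = Mm.adjugate * (Mm * Mi) := by rw [mul_assoc]
        _ = Mm.adjugate := by rw [hMmMi, mul_one]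
      have E2 : mstar (cj : OO →+* OO) Mm = !![Mm 1 1, -(Mm 0 1); -(Mm 1 0), Mm 0 0] := by
        rw [hmsMi, hadj, Matrix.adjugate_fin_two]
      have E3 : !![cj (Mm 1 1), cj (Mm 0 1); cj (Mm 1 0), cj (Mm 0 0)]
          = !![Mm 1 1, -(Mm 0 1); -(Mm 1 0), Mm 0 0] := by
        rw [← E2]
        conv_rhs => rw [Matrix.eta_fin_two Mm]
        rw [mstar_fin_two]
        rfl
      obtain ⟨e00, e01, e10, e11⟩ := fin_two_entries E3
      obtain ⟨a₀, ha₀⟩ := hfix (Mm 0 0) e11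
      obtain ⟨d₀, hd₀⟩ := hfix (Mm 1 1) e00
      obtain ⟨b₀, hb₀⟩ := hanti (Mm 0 1) e01
      obtain ⟨c₀, hc₀⟩ := hanti (Mm 1 0) e10
      obtain ⟨x, y, z, hV, heq⟩ := master_solve' p u' ℓ hnil hdiv hu' (a₀ - d₀) b₀ c₀
      set v : O ⧸ Ideal.span {π} ^ ℓ := x ^ 2 + u' * (y * z) with hvdef
      set n : O ⧸ Ideal.span {π} ^ ℓ := -(↑hV.unit⁻¹) with hndef
      have hnv : n * v = -1 := by
        have hval := IsUnit.val_inv_mul hV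
        rw [hndef]; linear_combination -hval
      have hnu : IsUnit n := by rw [hndef]; exact (Units.isUnit _).neg
      obtain ⟨pp, qq, hppqq⟩ := norm_surj' ρ hρs hunit hOddCard p ℓ hnil h2R hker u' hu' n hnu
      set w : OO := alg pp + alg qq * ε with hwdef
      set w' : OO := alg pp - alg qq * ε with hw'def
      have hcjw : cj w = w' := by
        rw [hwdef, hw'def, _root_.map_add, _root_.map_mul, AlgEquiv.commutes,
          AlgEquiv.commutes, hcj]
        ring
      have hNw : w' * w = alg n := by
        rw [hwdef, hw'def, ← hppqq, _root_.map_sub, _root_.map_mul, map_pow, map_pow]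
        linear_combination (-(alg qq) ^ 2) * hε2
      have hVOO : (alg x) ^ 2 + alg u' * (alg y * alg z) = alg v := by
        rw [hvdef, _root_.map_add, map_pow, _root_.map_mul, _root_.map_mul]
      have hmaster : w' * w * ((alg x) ^ 2 + alg u' * (alg y * alg z)) = -1 := by
        rw [hVOO, hNw, ← _root_.map_mul, hnv, _root_.map_neg, _root_.map_one]
      have hcommOO : alg x * (alg a₀ - alg d₀) +
          alg u' * (alg b₀ * alg z + alg c₀ * alg y) = 0 := by
        have hmapped := congrArg alg heq
        simp only [_root_.map_add, _root_.map_mul, _root_.map_sub, _root_.map_zero] at hmapped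
        linear_combination hmapped
      set H : Matrix (Fin 2) (Fin 2) OO :=
        !![w * alg x, w * (alg y * ε); w * (alg z * ε), -(w * alg x)] with hHdef
      have f1 : (cj : OO →+* OO) (w * alg x) = w' * alg x := by
        show cj (w * alg x) = w' * alg x
        rw [_root_.map_mul, hcjw, AlgEquiv.commutes]
      have f2 : (cj : OO →+* OO) (w * (alg y * ε)) = -(w' * (alg y * ε)) := by
        show cj (w * (alg y * ε)) = -(w' * (alg y * ε))
        rw [_root_.map_mul, _root_.map_mul, hcjw, AlgEquiv.commutes, hcj]
        ring
      have f3 : (cj : OO →+* OO) (w * (alg z * ε)) = -(w' * (alg z * ε)) := by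
        show cj (w * (alg z * ε)) = -(w' * (alg z * ε))
        rw [_root_.map_mul, _root_.map_mul, hcjw, AlgEquiv.commutes, hcj]
        ring
      have f4 : (cj : OO →+* OO) (-(w * alg x)) = -(w' * alg x) := by
        rw [_root_.map_neg, f1]
      have hUnit : mstar (cj : OO →+* OO) H * H = 1 := by
        rw [hHdef, mstar_fin_two, f1, f2, f3, f4, Matrix.mul_fin_two, Matrix.one_fin_two]
        refine fin_two_mat_eq ?_ ?_ ?_ ?_
        · linear_combination (-1 : OO) * hmaster - (w' * w * (alg y * alg z)) * hε2
        · ring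
        · ring
        · linear_combination (-1 : OO) * hmaster - (w' * w * (alg y * alg z)) * hε2
      have hMmlit : Mm = !![alg a₀, alg b₀ * ε; alg c₀ * ε, alg d₀] := by
        conv_lhs => rw [Matrix.eta_fin_two Mm]
        rw [ha₀, hb₀, hc₀, hd₀]
      have hMilit : Mi = !![alg d₀, -(alg b₀ * ε); -(alg c₀ * ε), alg a₀] := by
        rw [hadj, hMmlit, Matrix.adjugate_fin_two_of]
      have hHM : H * Mm = Mi * H := by
        rw [hHdef, hMmlit, hMilit, Matrix.mul_fin_two, Matrix.mul_fin_two]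
        refine fin_two_mat_eq ?_ ?_ ?_ ?_
        · linear_combination w * hcommOO + w * (alg b₀ * alg z + alg c₀ * alg y) * hε2
        · ring
        · ring
        · linear_combination w * hcommOO + w * (alg b₀ * alg z + alg c₀ * alg y) * hε2
      have hHinv : H * mstar (cj : OO →+* OO) H = 1 := mul_eq_one_comm.mp hUnit
      set Hgl : GL (Fin 2) OO := ⟨H, mstar (cj : OO →+* OO) H, hHinv, hUnit⟩ with hHgldef
      have hmem : Hgl ∈ GU2 OO (cj : OO →+* OO) := hUnit
      refine isConj_iff.mpr ⟨⟨Hgl, hmem⟩, ?_⟩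
      have hGLeq : Hgl * Agl = Agl⁻¹ * Hgl := by
        apply Units.ext
        rw [Units.val_mul, Units.val_mul]
        exact hHM
      have hsub : (⟨Hgl, hmem⟩ : ↥(GU2 OO (cj : OO →+* OO))) * A
          = A⁻¹ * ⟨Hgl, hmem⟩ := by
        apply Subtype.ext
        exact hGLeq
      calc (⟨Hgl, hmem⟩ : ↥(GU2 OO (cj : OO →+* OO))) * A * (⟨Hgl, hmem⟩ : ↥(GU2 OO (cj : OO →+* OO)))⁻¹
          = (A⁻¹ * ⟨Hgl, hmem⟩) * (⟨Hgl, hmem⟩ : ↥(GU2 OO (cj : OO →+* OO)))⁻¹ := by rw [hsub]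
      _ = A⁻¹ := by rw [mul_inv_cancel_right]
    · -- det = -1
      have hadj : Mi = -Mm.adjugate := by
        have h1 : (-Mm.adjugate) * Mm = 1 := by
          rw [neg_mul, Matrix.adjugate_mul, hdm1]
          simp
        calc Mi = 1 * Mi := (one_mul Mi).symm
        _ = ((-Mm.adjugate) * Mm) * Mi := by rw [h1]
        _ = (-Mm.adjugate) * (Mm * Mi) := by rw [mul_assoc]
        _ = -Mm.adjugate := by rw [hMmMi, mul_one]
      have htradj : Mm.adjugate.trace = Mm.trace := by
        rw [Matrix.adjugate_fin_two, Matrix.trace_fin_two, Matrix.trace_fin_two]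
        simp [add_comm]
      have htr2 : Mi.trace = -(Mm.trace) := by
        rw [hadj, Matrix.trace_neg, htradj]
      have htr0 : Mm.trace = 0 := by
        have h2t : (2 : OO) * Mm.trace = 0 := by linear_combination htr + htr2
        exact (IsUnit.mul_right_eq_zero h2OO).mp h2t
      have htr0' : Mm 0 0 + Mm 1 1 = 0 := by rw [← Matrix.trace_fin_two]; exact htr0
      have hadjeq : Mm.adjugate = -Mm := by
        rw [Matrix.adjugate_fin_two]
        conv_rhs => rw [Matrix.eta_fin_two Mm]
        rw [neg_fin_two_mat]
        refine fin_two_mat_eq ?_ rfl rfl ?_ <;> linear_combination htr0'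
      have hMieq : Mi = Mm := by rw [hadj, hadjeq, neg_neg]
      have hAA : A⁻¹ = A := by
        apply Subtype.ext
        apply Units.ext
        exact hMieq
      rw [hAA]
end
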